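/- arXiv:1811.09425 — 6 statements merged into one kernel-verified Lean document; each statement's English description precedes it below -/
import Mathlib

section
/- Define f : ℝ_{>0}² → ℝ by f(x) = (1 + (1/5)·x₁²x₂²)^{1/2}. The system x₁ = f(x), x₂ = f(x) has exactly two solutions in ℝ_{>0}², namely the points (s,s) with s² = (5+√5)/2 and s² = (5−√5)/2, and both solutions are nondegenerate (the Jacobian of g(x) = (x₁ − f(x), x₂ − f(x)) is invertible at each of them). -/
open Matrix

/-- `f(x) = (1 + (1/5) x₁² x₂²)^{1/2}`. -/
noncomputable def fEx (x : Fin 2 → ℝ) : ℝ :=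
  Real.sqrt (1 + (1 / 5) * (x 0) ^ 2 * (x 1) ^ 2)

/-- `g(x) = (x₁ - f(x), x₂ - f(x))`. -/
noncomputable def gEx (x : Fin 2 → ℝ) : Fin 2 → ℝ :=
  ![x 0 - fEx x, x 1 - fEx x]

lemma fEx_fixed (t : ℝ) (ht : 0 < t) (heq : t ^ 2 - 5 * t + 5 = 0) :
    fEx (fun _ => Real.sqrt t) = Real.sqrt t := by
  have h1 : Real.sqrt t ^ 2 = t := Real.sq_sqrt ht.le
  have h2 : (1 : ℝ) + 1 / 5 * Real.sqrt t ^ 2 * Real.sqrt t ^ 2 = t := by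
    rw [h1]; nlinarith [heq]
  simp only [fEx]
  rw [h2]

lemma sqrt5_lt : Real.sqrt 5 < 5 := by
  nlinarith [Real.sq_sqrt (by norm_num : (5:ℝ) ≥ 0), Real.sqrt_nonneg 5]

lemma sqrt5_pos : 0 < Real.sqrt 5 := Real.sqrt_pos.2 (by norm_num)

lemma mem_sol (t : ℝ) (ht : 0 < t) (heq : t ^ 2 - 5 * t + 5 = 0) :
    (fun _ : Fin 2 => Real.sqrt t) ∈
      {x : Fin 2 → ℝ | (∀ i, 0 < x i) ∧ x 0 = fEx x ∧ x 1 = fEx x} := by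
  have h := fEx_fixed t ht heq
  exact ⟨fun i => Real.sqrt_pos.2 ht, h.symm, h.symm⟩

set_option maxHeartbeats 1000000 in
/-- **Remark (optimality).** -/
theorem two_positive_solutions_example :
    ({x : Fin 2 → ℝ | (∀ i, 0 < x i) ∧ x 0 = fEx x ∧ x 1 = fEx x}
      = {(fun _ => Real.sqrt ((5 + Real.sqrt 5) / 2)),
         (fun _ => Real.sqrt ((5 - Real.sqrt 5) / 2))})
    ∧ (fun _ : Fin 2 => Real.sqrt ((5 + Real.sqrt 5) / 2))
        ≠ (fun _ : Fin 2 => Real.sqrt ((5 - Real.sqrt 5) / 2))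
    ∧ ∀ x ∈ {x : Fin 2 → ℝ | (∀ i, 0 < x i) ∧ x 0 = fEx x ∧ x 1 = fEx x},
        (Matrix.of fun i j : Fin 2 =>
            fderiv ℝ (fun y => gEx y i) x (Pi.single j 1)).det ≠ 0 := by
  have hr : Real.sqrt 5 ^ 2 = 5 := Real.sq_sqrt (by norm_num)
  have htp : (0:ℝ) < (5 + Real.sqrt 5) / 2 := by nlinarith [sqrt5_pos]
  have htm : (0:ℝ) < (5 - Real.sqrt 5) / 2 := by nlinarith [sqrt5_lt]
  have heqp : ((5 + Real.sqrt 5) / 2) ^ 2 - 5 * ((5 + Real.sqrt 5) / 2) + 5 = 0 := by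
    nlinarith [hr]
  have heqm : ((5 - Real.sqrt 5) / 2) ^ 2 - 5 * ((5 - Real.sqrt 5) / 2) + 5 = 0 := by
    nlinarith [hr]
  refine ⟨?_, ?_, ?_⟩
  · -- set equality
    ext x
    simp only [Set.mem_setOf_eq, Set.mem_insert_iff, Set.mem_singleton_iff]
    constructor
    · rintro ⟨hpos, hx0, hx1⟩
      have hx10 : x 1 = x 0 := hx1.trans hx0.symm
      have h0pos := hpos 0
      have harg : (0:ℝ) ≤ 1 + (1/5) * (x 0)^2 * (x 1)^2 := by positivity
      have hs2 : (x 0) ^ 2 = 1 + (1/5) * (x 0)^2 * (x 1)^2 := by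
        conv_lhs => rw [hx0]
        simp only [fEx]; rw [Real.sq_sqrt harg]
      rw [hx10] at hs2
      set t := (x 0) ^ 2 with ht
      have hfac : (t - (5 + Real.sqrt 5) / 2) * (t - (5 - Real.sqrt 5) / 2) = 0 := by
        have : t ^ 2 - 5 * t + 5 = 0 := by nlinarith [hs2]
        nlinarith [hr, this]
      have hx0sqrt : Real.sqrt t = x 0 := by
        rw [ht]; exact Real.sqrt_sq h0pos.le
      rcases mul_eq_zero.1 hfac with h | h
      · left
        have htt : t = (5 + Real.sqrt 5) / 2 := by linarith
        funext i
        have : x 0 = Real.sqrt ((5 + Real.sqrt 5) / 2) := by rw [← htt, hx0sqrt]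
        fin_cases i
        · exact this
        · exact hx10.trans this
      · right
        have htt : t = (5 - Real.sqrt 5) / 2 := by linarith
        funext i
        have : x 0 = Real.sqrt ((5 - Real.sqrt 5) / 2) := by rw [← htt, hx0sqrt]
        fin_cases i
        · exact this
        · exact hx10.trans this
    · rintro (rfl | rfl)
      · exact mem_sol _ htp heqp
      · exact mem_sol _ htm heqm
  · -- distinctness
    intro h
    have h0 := congrFun h 0
    have : (5 + Real.sqrt 5) / 2 = (5 - Real.sqrt 5) / 2 := by
      rw [← Real.sq_sqrt htp.le, ← Real.sq_sqrt htm.le, h0]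
    nlinarith [sqrt5_pos]
  · -- nondegeneracy
    rintro x ⟨hpos, hx0, hx1⟩
    have hx10 : x 1 = x 0 := hx1.trans hx0.symm
    have h0pos := hpos 0
    have hv : (0:ℝ) < 1 + 1/5 * (x 0 * x 0) * (x 1 * x 1) := by
      nlinarith [mul_self_nonneg (x 0 * x 1)]
    -- the square root of the argument equals x 0
    have hroot : Real.sqrt (1 + 1/5 * (x 0 * x 0) * (x 1 * x 1)) = x 0 := by
      have harg : (1:ℝ) + 1/5 * (x 0 * x 0) * (x 1 * x 1)
          = 1 + (1/5) * (x 0)^2 * (x 1)^2 := by ring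
      rw [harg, ← fEx, ← hx0]
    have hs2 : x 0 * x 0 = 1 + 1/5 * (x 0 * x 0) * (x 0 * x 0) := by
      have h2 := Real.mul_self_sqrt hv.le
      rw [hroot, hx10] at h2
      exact h2
    -- derivative of fEx
    have h0 := hasFDerivAt_apply (𝕜 := ℝ) (F' := fun _ : Fin 2 => ℝ) 0 x
    have h1 := hasFDerivAt_apply (𝕜 := ℝ) (F' := fun _ : Fin 2 => ℝ) 1 x
    have hu := ((((h0.mul h0).const_mul ((1:ℝ)/5)).mul (h1.mul h1)).const_add 1)
    have hsd := (Real.hasDerivAt_sqrt (ne_of_gt hv)).comp_hasFDerivAt x hu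
    simp only [Function.comp_def, Pi.mul_apply] at hsd
    have heqf : fEx = (fun y : Fin 2 → ℝ =>
        Real.sqrt (1 + 1/5 * (y 0 * y 0) * (y 1 * y 1))) := by
      funext y; simp only [fEx]; ring_nf
    rw [← heqf] at hsd
    rw [hroot] at hsd
    -- derivatives of the components of gEx
    have p00 : (Pi.single (M := fun _ : Fin 2 => ℝ) 0 1) 0 = 1 := by simp
    have p01 : (Pi.single (M := fun _ : Fin 2 => ℝ) 0 1) 1 = 0 := by simp [Pi.single_eq_of_ne]
    have p10 : (Pi.single (M := fun _ : Fin 2 => ℝ) 1 1) 0 = 0 := by simp [Pi.single_eq_of_ne]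
    have p11 : (Pi.single (M := fun _ : Fin 2 => ℝ) 1 1) 1 = 1 := by simp
    have hg0 : (fun y => gEx y 0) = fun y : Fin 2 → ℝ => y 0 - fEx y := by
      funext y; simp [gEx]
    have hg1 : (fun y => gEx y 1) = fun y : Fin 2 → ℝ => y 1 - fEx y := by
      funext y; simp [gEx]
    have hd0 : fderiv ℝ (fun y : Fin 2 → ℝ => y 0 - fEx y) x = _ := (h0.sub hsd).fderiv
    have hd1 : fderiv ℝ (fun y : Fin 2 → ℝ => y 1 - fEx y) x = _ := (h1.sub hsd).fderiv
    have e00 : fderiv ℝ (fun y => gEx y 0) x (Pi.single 0 1)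
        = 1 - 1 / (2 * x 0) * (2/5 * x 0 * (x 1 * x 1)) := by
      rw [hg0, hd0]
      simp only [ContinuousLinearMap.sub_apply, ContinuousLinearMap.add_apply,
        ContinuousLinearMap.smul_apply, ContinuousLinearMap.proj_apply,
        ContinuousLinearMap.coe_smul', Pi.smul_apply, smul_eq_mul, p00, p01, p10, p11]
      ring
    have e01 : fderiv ℝ (fun y => gEx y 0) x (Pi.single 1 1)
        = - (1 / (2 * x 0) * (2/5 * (x 0 * x 0) * x 1)) := by
      rw [hg0, hd0]
      simp only [ContinuousLinearMap.sub_apply, ContinuousLinearMap.add_apply,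
        ContinuousLinearMap.smul_apply, ContinuousLinearMap.proj_apply,
        ContinuousLinearMap.coe_smul', Pi.smul_apply, smul_eq_mul, p00, p01, p10, p11]
      ring
    have e10 : fderiv ℝ (fun y => gEx y 1) x (Pi.single 0 1)
        = - (1 / (2 * x 0) * (2/5 * x 0 * (x 1 * x 1))) := by
      rw [hg1, hd1]
      simp only [ContinuousLinearMap.sub_apply, ContinuousLinearMap.add_apply,
        ContinuousLinearMap.smul_apply, ContinuousLinearMap.proj_apply,
        ContinuousLinearMap.coe_smul', Pi.smul_apply, smul_eq_mul, p00, p01, p10, p11]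
      ring
    have e11 : fderiv ℝ (fun y => gEx y 1) x (Pi.single 1 1)
        = 1 - 1 / (2 * x 0) * (2/5 * (x 0 * x 0) * x 1) := by
      rw [hg1, hd1]
      simp only [ContinuousLinearMap.sub_apply, ContinuousLinearMap.add_apply,
        ContinuousLinearMap.smul_apply, ContinuousLinearMap.proj_apply,
        ContinuousLinearMap.coe_smul', Pi.smul_apply, smul_eq_mul, p00, p01, p10, p11]
      ring
    rw [Matrix.det_fin_two]
    simp only [Matrix.of_apply]
    rw [e00, e01, e10, e11, hx10]
    have hne : x 0 ≠ 0 := ne_of_gt h0pos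
    have hc1 : 1 / (2 * x 0) * (2/5 * x 0 * (x 0 * x 0)) = x 0 * x 0 / 5 := by
      field_simp
    have hc2 : 1 / (2 * x 0) * (2/5 * (x 0 * x 0) * x 0) = x 0 * x 0 / 5 := by
      field_simp
    rw [hc1, hc2]
    clear hsd hd0 hd1 hu h0 h1 e00 e01 e10 e11 hg0 hg1 hroot hx0 hx1
    intro h
    ring_nf at h
    have hx2 : x 0 ^ 2 = 5 / 2 := by linarith
    rw [pow_two] at hx2
    rw [hx2] at hs2
    norm_num at hs2
end

section
/- Let v₁,…,vₙ,w be independent standard Gaussian random vectors in ℝ^n. Then the probability that w lies in the convex cone generated by v₁,…,vₙ equals 2^{-n}; that is, the product Gaussian measure of the set {(v₁,…,vₙ,w) : w ∈ cone(v₁,…,vₙ)} equals 2^{-n}. -/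
open MeasureTheory ProbabilityTheory Matrix
open scoped ENNReal NNReal BigOperators

namespace GaussianCone

noncomputable section

abbrev Evec (n : ℕ) := Fin n → ℝ

abbrev gauss (n : ℕ) : Measure (Evec n) := Measure.pi fun _ : Fin n => gaussianReal 0 1

lemma gauss_ac (n : ℕ) : gauss n ≪ (volume : Measure (Evec n)) := by
  rw [show (volume : Measure (Evec n)) = Measure.pi fun _ => (volume : Measure ℝ) from
    volume_pi]
  induction n with
  | zero =>
    refine Measure.AbsolutelyContinuous.mk fun s hs h0 => ?_
    rcases s.eq_empty_or_nonempty with rfl | ⟨x, hx⟩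
    · simp
    · exfalso
      have hsu : s = Set.univ := by
        ext y
        simp only [Set.mem_univ, iff_true]
        rwa [Subsingleton.elim y x]
      rw [hsu, Measure.pi_univ] at h0
      simp at h0
  | succ k ih =>
    set e := MeasurableEquiv.piFinSuccAbove (fun _ : Fin (k + 1) => ℝ) 0 with he
    have h1 : MeasurePreserving e (Measure.pi fun _ : Fin (k + 1) => gaussianReal 0 1)
        ((gaussianReal 0 1).prod (Measure.pi fun _ : Fin k => gaussianReal 0 1)) :=
      measurePreserving_piFinSuccAbove (fun _ : Fin (k + 1) => gaussianReal 0 1) 0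
    have h2 : MeasurePreserving e (Measure.pi fun _ : Fin (k + 1) => (volume : Measure ℝ))
        ((volume : Measure ℝ).prod (Measure.pi fun _ : Fin k => (volume : Measure ℝ))) :=
      measurePreserving_piFinSuccAbove (fun _ : Fin (k + 1) => (volume : Measure ℝ)) 0
    show (Measure.pi fun _ : Fin (k + 1) => gaussianReal 0 1) ≪ _
    rw [← (h1.symm e).map_eq, ← (h2.symm e).map_eq]
    exact Measure.AbsolutelyContinuous.map
      ((gaussianReal_absolutelyContinuous 0 one_ne_zero).prod ih) e.symm.measurable

lemma gauss_null_span {n : ℕ} {ι : Type*} [Fintype ι] (h : Fintype.card ι < n)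
    (f : ι → Evec n) :
    gauss n ((Submodule.span ℝ (Set.range f) : Submodule ℝ (Evec n)) : Set (Evec n)) = 0 := by
  classical
  refine gauss_ac n ?_
  refine Measure.addHaar_submodule _ _ ?_
  have hlt : Submodule.span ℝ (Set.range f) < ⊤ := by
    refine span_lt_top_of_card_lt_finrank ?_
    have h1 : (Set.range f).toFinset.card ≤ Fintype.card ι := by
      rw [Set.toFinset_range]
      exact (Finset.card_image_le).trans (by simp)
    have h2 : Module.finrank ℝ (Evec n) = n := by
      simp [Module.finrank_pi]
    omega
  exact hlt.ne


lemma measurableSet_mem_span {ι : Type*} [Fintype ι] (n : ℕ) :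
    MeasurableSet {p : (ι → (Fin n → ℝ)) × (Fin n → ℝ) |
      p.2 ∈ Submodule.span ℝ (Set.range p.1)} := by
  classical
  have hset : {p : (ι → (Fin n → ℝ)) × (Fin n → ℝ) |
        p.2 ∈ Submodule.span ℝ (Set.range p.1)}
      = ⋂ k : ℕ, ⋃ q : ι → ℚ,
        {p : (ι → (Fin n → ℝ)) × (Fin n → ℝ) |
          dist p.2 (∑ i, (q i : ℝ) • p.1 i) < 1 / (k + 1)} := by
    ext p
    simp only [Set.mem_setOf_eq, Set.mem_iInter, Set.mem_iUnion]
    constructor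
    · intro hp k
      obtain ⟨c, hc⟩ := (Submodule.mem_span_range_iff_exists_fun ℝ).mp hp
      have hk : (0 : ℝ) < 1 / (k + 1) := by positivity
      set B : ℝ := (∑ i, ‖p.1 i‖) + 1 with hB
      have hBpos : 0 < B := by positivity
      set δ : ℝ := (1 / (k + 1)) / B with hδdef
      have hδ : 0 < δ := by positivity
      choose q hq using fun i => exists_rat_near (K := ℝ) (c i) hδ
      refine ⟨q, ?_⟩
      have hsum : p.2 - ∑ i, (q i : ℝ) • p.1 i = ∑ i, (c i - (q i : ℝ)) • p.1 i := by
        rw [← hc, ← Finset.sum_sub_distrib]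
        congr 1
        funext i
        rw [sub_smul]
      rw [dist_eq_norm, hsum]
      calc ‖∑ i, (c i - (q i : ℝ)) • p.1 i‖ ≤ ∑ i, ‖(c i - (q i : ℝ)) • p.1 i‖ :=
            norm_sum_le _ _
        _ ≤ ∑ i, δ * ‖p.1 i‖ := by
            refine Finset.sum_le_sum fun i _ => ?_
            rw [norm_smul]
            have := (hq i).le
            have h0 : ‖c i - (q i : ℝ)‖ ≤ δ := by rwa [Real.norm_eq_abs]
            exact mul_le_mul_of_nonneg_right h0 (norm_nonneg _)
        _ = δ * ∑ i, ‖p.1 i‖ := by rw [Finset.mul_sum]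
        _ < δ * B := by
            refine mul_lt_mul_of_pos_left ?_ hδ
            simp [hB]
        _ = 1 / (k + 1) := by
            rw [hδdef, div_mul_cancel₀]
            exact hBpos.ne'
    · intro hp
      have hclosed : IsClosed ((Submodule.span ℝ (Set.range p.1) :
          Submodule ℝ (Fin n → ℝ)) : Set (Fin n → ℝ)) :=
        Submodule.closed_of_finiteDimensional _
      have : p.2 ∈ closure ((Submodule.span ℝ (Set.range p.1) :
          Submodule ℝ (Fin n → ℝ)) : Set (Fin n → ℝ)) := by
        refine Metric.mem_closure_iff.mpr fun ε hε => ?_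
        obtain ⟨k, hk⟩ := exists_nat_one_div_lt hε
        obtain ⟨q, hq⟩ := hp k
        refine ⟨∑ i, (q i : ℝ) • p.1 i, ?_, ?_⟩
        · exact Submodule.sum_mem _ fun i _ =>
            Submodule.smul_mem _ _ (Submodule.subset_span ⟨i, rfl⟩)
        · exact lt_trans hq (by exact_mod_cast hk)
      rwa [hclosed.closure_eq] at this
  rw [hset]
  refine MeasurableSet.iInter fun k => MeasurableSet.iUnion fun q => ?_
  have hcont : Continuous fun p : (ι → (Fin n → ℝ)) × (Fin n → ℝ) =>
      dist p.2 (∑ i, (q i : ℝ) • p.1 i) := by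
    refine Continuous.dist continuous_snd ?_
    exact continuous_finset_sum _ fun i _ =>
      (by fun_prop)
  exact measurableSet_lt hcont.measurable measurable_const


lemma null_li (n : ℕ) : ∀ m, m ≤ n →
    (Measure.pi fun _ : Fin m => gauss n) {u : Fin m → Evec n | ¬ LinearIndependent ℝ u}
      = 0 := by
  intro m
  induction m with
  | zero =>
    intro _
    have : {u : Fin 0 → Evec n | ¬ LinearIndependent ℝ u} = ∅ := by
      ext u
      simp [linearIndependent_empty_type]
    simp [this]
  | succ m ih =>
    intro hmn
    have ihm := ih (by omega)
    set ν : Measure (Fin m → Evec n) := Measure.pi fun _ : Fin m => gauss n with hν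
    set C : Set (Fin m → Evec n) :=
      toMeasurable ν {y : Fin m → Evec n | ¬ LinearIndependent ℝ y} with hC
    have hCnull : ν C = 0 := by rw [hC, measure_toMeasurable]; exact ihm
    set e := MeasurableEquiv.piFinSuccAbove (fun _ : Fin (m + 1) => Evec n) (Fin.last m)
      with he
    have hmp : MeasurePreserving e (Measure.pi fun _ : Fin (m + 1) => gauss n)
        ((gauss n).prod ν) :=
      measurePreserving_piFinSuccAbove (fun _ : Fin (m + 1) => gauss n) (Fin.last m)
    set S₂ : Set (Evec n × (Fin m → Evec n)) :=
      {p | p.1 ∈ Submodule.span ℝ (Set.range p.2)} with hS₂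
    have hS₂m : MeasurableSet S₂ := by
      have h1 := measurableSet_mem_span (ι := Fin m) n
      have h2 : Measurable fun p : Evec n × (Fin m → Evec n) => (p.2, p.1) :=
        measurable_snd.prodMk measurable_fst
      exact h2 h1
    have hsub : {u : Fin (m + 1) → Evec n | ¬ LinearIndependent ℝ u}
        ⊆ e ⁻¹' ((Set.univ ×ˢ C) ∪ S₂) := by
      intro u hu
      have heu : e u = (u (Fin.last m), fun j => u (Fin.castSucc j)) := by
        rw [he]
        ext
        · simp [MeasurableEquiv.piFinSuccAbove]
        · simp [MeasurableEquiv.piFinSuccAbove, Fin.succAbove_last, Fin.init]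
      by_cases hy : LinearIndependent ℝ (fun j : Fin m => u (Fin.castSucc j))
      · right
        show (e u).1 ∈ Submodule.span ℝ (Set.range (e u).2)
        rw [heu]
        by_contra hx
        apply hu
        have hsnoc : LinearIndependent ℝ
            (Fin.snoc (fun j : Fin m => u (Fin.castSucc j)) (u (Fin.last m)) :
              Fin (m + 1) → Evec n) :=
          linearIndependent_fin_snoc.mpr ⟨hy, hx⟩
        have hequ : (Fin.snoc (fun j : Fin m => u (Fin.castSucc j)) (u (Fin.last m)) :
            Fin (m + 1) → Evec n) = u := by
          funext k
          induction k using Fin.lastCases with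
          | last => simp
          | cast j => simp
        rwa [hequ] at hsnoc
      · left
        constructor
        · trivial
        · show (e u).2 ∈ C
          rw [heu]
          exact subset_toMeasurable _ _ hy
    refine le_antisymm ?_ zero_le
    calc (Measure.pi fun _ : Fin (m + 1) => gauss n)
          {u : Fin (m + 1) → Evec n | ¬ LinearIndependent ℝ u}
        ≤ (Measure.pi fun _ : Fin (m + 1) => gauss n) (e ⁻¹' ((Set.univ ×ˢ C) ∪ S₂)) :=
          measure_mono hsub
      _ = ((gauss n).prod ν) ((Set.univ ×ˢ C) ∪ S₂) := by
          refine hmp.measure_preimage ?_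
          exact ((MeasurableSet.univ.prod (measurableSet_toMeasurable _ _)).union
            hS₂m).nullMeasurableSet
      _ ≤ ((gauss n).prod ν) (Set.univ ×ˢ C) + ((gauss n).prod ν) S₂ := measure_union_le _ _
      _ = 0 := by
          have h1 : ((gauss n).prod ν) (Set.univ ×ˢ C) = 0 := by
            rw [Measure.prod_prod, hCnull, mul_zero]
          have h2 : ((gauss n).prod ν) S₂ = 0 := by
            rw [Measure.prod_apply_symm hS₂m]
            have hzero : ∀ y : Fin m → Evec n,
                gauss n ((fun x => (x, y)) ⁻¹' S₂) = 0 := by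
              intro y
              have : ((fun x => (x, y)) ⁻¹' S₂)
                  = ((Submodule.span ℝ (Set.range y) : Submodule ℝ (Evec n)) :
                      Set (Evec n)) := rfl
              rw [this]
              exact gauss_null_span (by simp; omega) y
            simp only [hzero]
            simp
          rw [h1, h2, add_zero]


variable {n : ℕ}

instance : MeasurableSpace (Matrix (Fin n) (Fin n) ℝ) :=
  inferInstanceAs (MeasurableSpace (Fin n → Fin n → ℝ))

instance : BorelSpace (Matrix (Fin n) (Fin n) ℝ) :=
  inferInstanceAs (BorelSpace (Fin n → Fin n → ℝ))

def Mm (n : ℕ) (v : Fin (n + 1) → Evec n) : Matrix (Fin n) (Fin n) ℝ :=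
  Matrix.of fun i j => v (Fin.castSucc j) i

def tc (n : ℕ) (v : Fin (n + 1) → Evec n) : Fin n → ℝ :=
  (Mm n v)⁻¹ *ᵥ v (Fin.last n)

lemma measurable_matrix_det : Measurable fun A : Matrix (Fin n) (Fin n) ℝ => A.det :=
  (continuous_id.matrix_det).measurable

lemma measurable_Mm : Measurable (Mm n) := by
  refine measurable_pi_iff.mpr fun i => measurable_pi_iff.mpr fun j => ?_
  exact (measurable_pi_apply i).comp (measurable_pi_apply (Fin.castSucc j))

lemma measurable_tc : Measurable (tc n) := by
  have htc : tc n = fun v =>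
      Ring.inverse ((Mm n v).det) • ((Mm n v).adjugate *ᵥ v (Fin.last n)) := by
    funext v
    rw [tc, Matrix.inv_def, Matrix.smul_mulVec]
  rw [htc]
  refine measurable_pi_iff.mpr fun i => ?_
  have hdet : Measurable fun v : Fin (n + 1) → Evec n => ((Mm n v).det)⁻¹ :=
    (measurable_matrix_det.comp measurable_Mm).inv
  have hadj : Measurable fun v : Fin (n + 1) → Evec n =>
      ((Mm n v).adjugate *ᵥ v (Fin.last n)) i := by
    have : (fun v : Fin (n + 1) → Evec n => ((Mm n v).adjugate *ᵥ v (Fin.last n)) i)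
        = fun v => ∑ j, (Mm n v).adjugate i j * v (Fin.last n) j := rfl
    rw [this]
    refine Finset.measurable_sum _ fun j _ => Measurable.mul ?_ ?_
    · have : (fun v : Fin (n + 1) → Evec n => (Mm n v).adjugate i j)
          = fun v => ((Mm n v).updateRow j (Pi.single i 1)).det := by
        funext v; rw [Matrix.adjugate_apply]
      rw [this]
      refine measurable_matrix_det.comp ?_
      refine measurable_pi_iff.mpr fun a => measurable_pi_iff.mpr fun b => ?_
      by_cases hab : a = j
      · subst hab
        simp only [Matrix.updateRow_self]
        exact measurable_const
      · simp only [Matrix.updateRow_ne hab]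
        exact ((measurable_pi_apply b).comp (measurable_pi_apply a)).comp measurable_Mm
    · exact (measurable_pi_apply j).comp (measurable_pi_apply (Fin.last n))
  have : (fun v => (Ring.inverse ((Mm n v).det) •
        ((Mm n v).adjugate *ᵥ v (Fin.last n))) i)
      = fun v => ((Mm n v).det)⁻¹ * ((Mm n v).adjugate *ᵥ v (Fin.last n)) i := by
    funext v
    simp [Ring.inverse_eq_inv']
  rw [this]
  exact hdet.mul hadj

lemma mulVec_Mm_eq_sum (v : Fin (n + 1) → Evec n) (t : Fin n → ℝ) :
    Mm n v *ᵥ t = ∑ j, t j • v (Fin.castSucc j) := by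
  funext i
  rw [Finset.sum_apply]
  simp [Matrix.mulVec, dotProduct, Mm, mul_comm]

lemma mulVec_tc (v : Fin (n + 1) → Evec n) (hdet : (Mm n v).det ≠ 0) :
    Mm n v *ᵥ tc n v = v (Fin.last n) := by
  rw [tc, Matrix.mulVec_mulVec, Matrix.mul_nonsing_inv _ (isUnit_iff_ne_zero.mpr hdet),
    Matrix.one_mulVec]

lemma tc_unique (v : Fin (n + 1) → Evec n) (hdet : (Mm n v).det ≠ 0) {t : Fin n → ℝ}
    (ht : Mm n v *ᵥ t = v (Fin.last n)) : t = tc n v := by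
  have : (Mm n v)⁻¹ *ᵥ (Mm n v *ᵥ t) = tc n v := by rw [ht, tc]
  rwa [Matrix.mulVec_mulVec, Matrix.nonsing_inv_mul _ (isUnit_iff_ne_zero.mpr hdet),
    Matrix.one_mulVec] at this

lemma det_ne_zero_of_li (v : Fin (n + 1) → Evec n)
    (h : LinearIndependent ℝ (fun j : Fin n => v (Fin.castSucc j))) :
    (Mm n v).det ≠ 0 := by
  intro hdet
  obtain ⟨g, hg0, hgv⟩ := (Matrix.exists_mulVec_eq_zero_iff).mpr hdet
  rw [mulVec_Mm_eq_sum] at hgv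
  exact hg0 (funext (Fintype.linearIndependent_iff.mp h g hgv))

/- flips -/
def dsg (ε : Fin n → Bool) : Fin n → ℝ := fun i => if ε i then 1 else -1

def csg (ε : Fin n → Bool) : Fin (n + 1) → ℝ :=
  Fin.lastCases 1 (dsg ε)

def flip (ε : Fin n → Bool) : (Fin (n + 1) → Evec n) → (Fin (n + 1) → Evec n) :=
  fun v k => csg ε k • v k

lemma csg_last (ε : Fin n → Bool) : csg ε (Fin.last n) = 1 := by
  simp [csg]

lemma csg_castSucc (ε : Fin n → Bool) (i : Fin n) : csg ε (Fin.castSucc i) = dsg ε i := by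
  simp [csg]

lemma dsg_sq (ε : Fin n → Bool) (i : Fin n) : dsg ε i * dsg ε i = 1 := by
  by_cases h : ε i <;> simp [dsg, h]

lemma flip_last (ε : Fin n → Bool) (v : Fin (n + 1) → Evec n) :
    flip ε v (Fin.last n) = v (Fin.last n) := by
  simp [flip, csg_last]

lemma Mm_flip (ε : Fin n → Bool) (v : Fin (n + 1) → Evec n) :
    Mm n (flip ε v) = Mm n v * Matrix.diagonal (dsg ε) := by
  ext i j
  rw [Matrix.mul_diagonal]
  show (csg ε (Fin.castSucc j) • v (Fin.castSucc j)) i = Mm n v i j * dsg ε j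
  rw [csg_castSucc]
  simp [Mm, mul_comm]

lemma diag_dsg_sq (ε : Fin n → Bool) :
    Matrix.diagonal (dsg ε) * Matrix.diagonal (dsg ε) = 1 := by
  rw [Matrix.diagonal_mul_diagonal]
  have : (fun i => dsg ε i * dsg ε i) = fun _ => (1 : ℝ) := by
    funext i; exact dsg_sq ε i
  rw [this, Matrix.diagonal_one]

lemma tc_flip (ε : Fin n → Bool) (v : Fin (n + 1) → Evec n) :
    tc n (flip ε v) = fun i => dsg ε i * tc n v i := by
  rw [tc, Mm_flip, flip_last, Matrix.mul_inv_rev,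
    Matrix.inv_eq_right_inv (diag_dsg_sq ε), ← Matrix.mulVec_mulVec]
  funext i
  rw [Matrix.mulVec_diagonal]
  rfl

lemma det_Mm_flip_ne (ε : Fin n → Bool) (v : Fin (n + 1) → Evec n)
    (h : (Mm n v).det ≠ 0) : (Mm n (flip ε v)).det ≠ 0 := by
  rw [Mm_flip, Matrix.det_mul, Matrix.det_diagonal]
  refine mul_ne_zero h (Finset.prod_ne_zero_iff.mpr fun i _ => ?_)
  by_cases hi : ε i <;> simp [dsg, hi]

/- measure preservation of flips -/
lemma mp_smul_gauss {c : ℝ} (hc : c = 1 ∨ c = -1) :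
    MeasurePreserving (fun x : Evec n => c • x) (gauss n) (gauss n) := by
  have hcoord : MeasurePreserving (fun r : ℝ => c * r) (gaussianReal 0 1)
      (gaussianReal 0 1) := by
    refine ⟨measurable_id.const_mul c, ?_⟩
    have h := gaussianReal_map_const_mul (μ := 0) (v := 1) c
    have h2 : (NNReal.mk (c ^ 2) (sq_nonneg c)) * 1 = 1 := by
      rw [mul_one]
      ext
      rcases hc with rfl | rfl <;> norm_num
    have h3 : (fun r : ℝ => c * r) = (c * ·) := rfl
    rw [h3, h, mul_zero, h2]
  have := measurePreserving_pi (fun _ : Fin n => gaussianReal 0 1)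
    (fun _ : Fin n => gaussianReal 0 1) (fun _ => hcoord)
  have heq : (fun (a : Evec n) (i : Fin n) => c * a i) = fun x : Evec n => c • x := by
    funext x i
    simp
  rwa [heq] at this

lemma mp_flip (ε : Fin n → Bool) :
    MeasurePreserving (flip ε) (Measure.pi fun _ : Fin (n + 1) => gauss n)
      (Measure.pi fun _ : Fin (n + 1) => gauss n) := by
  have hmp : ∀ k : Fin (n + 1),
      MeasurePreserving (fun x : Evec n => csg ε k • x) (gauss n) (gauss n) := by
    intro k
    refine mp_smul_gauss ?_
    induction k using Fin.lastCases with
    | last => left; exact csg_last ε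
    | cast i =>
      rw [csg_castSucc]
      by_cases h : ε i
      · left; simp [dsg, h]
      · right; simp [dsg, h]
  exact measurePreserving_pi _ _ hmp

end

end GaussianCone

open GaussianCone

/-- **Lemma (Gaussian cone probability).** For independent standard Gaussian vectors
`v₁, …, vₙ, w` in `ℝⁿ`, the probability that `w ∈ cone(v₁, …, vₙ)` equals `2^{-n}`.
Here the joint law is the standard Gaussian product measure on `(ℝⁿ)^{n+1}`, the vectors
`v₁, …, vₙ` are the first `n` coordinates and `w` the last, and
`cone(v₁,…,vₙ) = {∑ tᵢ vᵢ : tᵢ ≥ 0}`. -/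
theorem gaussian_cone_probability (n : ℕ) :
    (Measure.pi fun _ : Fin (n + 1) => Measure.pi fun _ : Fin n => gaussianReal 0 1)
      {v : Fin (n + 1) → Fin n → ℝ |
        ∃ t : Fin n → ℝ, (∀ i, 0 ≤ t i) ∧
          v (Fin.last n) = ∑ i, t i • v (Fin.castSucc i)}
    = 1 / 2 ^ n := by
  classical
  set μ : Measure (Fin (n + 1) → Evec n) := Measure.pi fun _ : Fin (n + 1) => gauss n with hμ
  show μ {v : Fin (n + 1) → Evec n | ∃ t : Fin n → ℝ, (∀ i, 0 ≤ t i) ∧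
      v (Fin.last n) = ∑ i, t i • v (Fin.castSucc i)} = 1 / 2 ^ n
  haveI : IsProbabilityMeasure μ := by rw [hμ]; infer_instance
  set S := {v : Fin (n + 1) → Evec n | ∃ t : Fin n → ℝ, (∀ i, 0 ≤ t i) ∧
      v (Fin.last n) = ∑ i, t i • v (Fin.castSucc i)} with hS
  set A := {v : Fin (n + 1) → Evec n | (Mm n v).det ≠ 0 ∧ ∀ i, 0 ≤ tc n v i} with hA
  set Apos := {v : Fin (n + 1) → Evec n | (Mm n v).det ≠ 0 ∧ ∀ i, 0 < tc n v i} with hApos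
  set Gdet := {v : Fin (n + 1) → Evec n |
      ¬ LinearIndependent ℝ (fun j : Fin n => v (Fin.castSucc j))} with hGdet
  set Nsp : Fin n → Set (Fin (n + 1) → Evec n) := fun i =>
    {v | v (Fin.last n) ∈ Submodule.span ℝ
      (Set.range fun j : {j : Fin n // j ≠ i} => v (Fin.castSucc (j : Fin n)))} with hNsp
  -- measurability of Apos
  have hdetmeas : Measurable fun v : Fin (n + 1) → Evec n => (Mm n v).det :=
    measurable_matrix_det.comp measurable_Mm
  have hAposm : MeasurableSet Apos := by
    have h1 : MeasurableSet {v : Fin (n + 1) → Evec n | (Mm n v).det ≠ 0} :=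
      (hdetmeas (measurableSet_singleton 0)).compl
    have h2 : MeasurableSet {v : Fin (n + 1) → Evec n | ∀ i, 0 < tc n v i} := by
      have : {v : Fin (n + 1) → Evec n | ∀ i, 0 < tc n v i}
          = ⋂ i, {v | 0 < tc n v i} := by ext v; simp
      rw [this]
      exact MeasurableSet.iInter fun i => measurableSet_lt measurable_const
        ((measurable_pi_apply i).comp measurable_tc)
    exact h1.inter h2
  -- the last-coordinate decomposition
  set ν : Measure (Fin n → Evec n) := Measure.pi fun _ : Fin n => gauss n with hν
  set e := MeasurableEquiv.piFinSuccAbove (fun _ : Fin (n + 1) => Evec n) (Fin.last n) with he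
  have hmp : MeasurePreserving e μ ((gauss n).prod ν) :=
    measurePreserving_piFinSuccAbove (fun _ : Fin (n + 1) => gauss n) (Fin.last n)
  have heu : ∀ v : Fin (n + 1) → Evec n,
      e v = (v (Fin.last n), fun j => v (Fin.castSucc j)) := by
    intro v
    rw [he]
    ext
    · simp [MeasurableEquiv.piFinSuccAbove]
    · simp [MeasurableEquiv.piFinSuccAbove, Fin.succAbove_last, Fin.init]
  -- null sets
  have hGdet0 : μ Gdet = 0 := by
    set C := toMeasurable ν {y : Fin n → Evec n | ¬ LinearIndependent ℝ y} with hC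
    have hCnull : ν C = 0 := by rw [hC, measure_toMeasurable]; exact null_li n n le_rfl
    have hsub : Gdet ⊆ e ⁻¹' (Set.univ ×ˢ C) := by
      intro v hv
      refine Set.mem_preimage.mpr (Set.mem_prod.mpr ⟨trivial, ?_⟩)
      show (e v).2 ∈ C
      rw [heu]
      exact subset_toMeasurable _ _ hv
    refine le_antisymm ?_ zero_le
    calc μ Gdet ≤ μ (e ⁻¹' (Set.univ ×ˢ C)) := measure_mono hsub
      _ = ((gauss n).prod ν) (Set.univ ×ˢ C) :=
          hmp.measure_preimage
            (MeasurableSet.univ.prod (measurableSet_toMeasurable _ _)).nullMeasurableSet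
      _ = 0 := by rw [Measure.prod_prod, hCnull, mul_zero]
  have hNsp0 : ∀ i, μ (Nsp i) = 0 := by
    intro i
    set S₂ : Set (Evec n × (Fin n → Evec n)) :=
      {p | p.1 ∈ Submodule.span ℝ
        (Set.range fun j : {j : Fin n // j ≠ i} => p.2 (j : Fin n))} with hS₂
    have hS₂m : MeasurableSet S₂ := by
      have h1 := measurableSet_mem_span (ι := {j : Fin n // j ≠ i}) n
      have h2 : Measurable fun p : Evec n × (Fin n → Evec n) =>
          ((fun j : {j : Fin n // j ≠ i} => p.2 (j : Fin n)), p.1) := by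
        refine Measurable.prodMk ?_ measurable_fst
        exact measurable_pi_iff.mpr fun j =>
          (measurable_pi_apply (j : Fin n)).comp measurable_snd
      exact h2 h1
    have hsub : Nsp i ⊆ e ⁻¹' S₂ := by
      intro v hv
      show (e v).1 ∈ Submodule.span ℝ
        (Set.range fun j : {j : Fin n // j ≠ i} => (e v).2 (j : Fin n))
      rw [heu]
      exact hv
    refine le_antisymm ?_ zero_le
    calc μ (Nsp i) ≤ μ (e ⁻¹' S₂) := measure_mono hsub
      _ = ((gauss n).prod ν) S₂ := hmp.measure_preimage hS₂m.nullMeasurableSet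
      _ = 0 := by
          rw [Measure.prod_apply_symm hS₂m]
          have hzero : ∀ y : Fin n → Evec n, gauss n ((fun x => (x, y)) ⁻¹' S₂) = 0 := by
            intro y
            have hcard : Fintype.card {j : Fin n // j ≠ i} < n := by
              have := Fintype.card_subtype_lt (p := fun j : Fin n => j ≠ i) (x := i)
                (by simp)
              simpa using this
            have hpre : ((fun x : Evec n => (x, y)) ⁻¹' S₂)
                = ((Submodule.span ℝ
                    (Set.range fun j : {j : Fin n // j ≠ i} => y (j : Fin n)) :
                      Submodule ℝ (Evec n)) : Set (Evec n)) := rfl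
            rw [hpre]
            exact gauss_null_span hcard _
          simp only [hzero]
          simp
  -- set relations
  have hAS : A ⊆ S := by
    rintro v ⟨hdet, hpos⟩
    exact ⟨tc n v, hpos, ((mulVec_Mm_eq_sum v (tc n v)).symm.trans (mulVec_tc v hdet)).symm⟩
  have hSA : S ⊆ A ∪ Gdet := by
    rintro v ⟨t, ht0, hsum⟩
    by_cases hdet : (Mm n v).det = 0
    · exact Or.inr (fun hli => (det_ne_zero_of_li v hli) hdet)
    · left
      refine ⟨hdet, ?_⟩
      have ht : Mm n v *ᵥ t = v (Fin.last n) := by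
        rw [mulVec_Mm_eq_sum]; exact hsum.symm
      intro i
      rw [← tc_unique v hdet ht]
      exact ht0 i
  have hspan_of_zero : ∀ (v : Fin (n + 1) → Evec n) (i : Fin n),
      (Mm n v).det ≠ 0 → tc n v i = 0 → v ∈ Nsp i := by
    intro v i hdet hzi
    have hw : v (Fin.last n) = ∑ j, tc n v j • v (Fin.castSucc j) :=
      ((mulVec_Mm_eq_sum v (tc n v)).symm.trans (mulVec_tc v hdet)).symm
    have hsplit : ∑ j, tc n v j • v (Fin.castSucc j)
        = ∑ j ∈ Finset.univ.erase i, tc n v j • v (Fin.castSucc j) := by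
      rw [← Finset.sum_erase_add _ _ (Finset.mem_univ i), hzi, zero_smul, add_zero]
    show v (Fin.last n) ∈ Submodule.span ℝ
      (Set.range fun j : {j : Fin n // j ≠ i} => v (Fin.castSucc (j : Fin n)))
    rw [hw, hsplit]
    refine Submodule.sum_mem _ fun j hj => Submodule.smul_mem _ _ ?_
    exact Submodule.subset_span ⟨⟨j, (Finset.mem_erase.mp hj).1⟩, rfl⟩
  have hAApos : A ⊆ Apos ∪ ⋃ i, Nsp i := by
    rintro v ⟨hdet, h0⟩
    by_cases hz : ∀ i, 0 < tc n v i
    · exact Or.inl ⟨hdet, hz⟩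
    · push_neg at hz
      obtain ⟨i, hi⟩ := hz
      have hzi : tc n v i = 0 := le_antisymm hi (h0 i)
      exact Or.inr (Set.mem_iUnion.mpr ⟨i, hspan_of_zero v i hdet hzi⟩)
  have hcover : Set.univ ⊆ (⋃ ε : Fin n → Bool, flip ε ⁻¹' Apos) ∪ (Gdet ∪ ⋃ i, Nsp i) := by
    intro v _
    by_cases hdet : (Mm n v).det = 0
    · exact Or.inr (Or.inl (fun hli => (det_ne_zero_of_li v hli) hdet))
    by_cases hz : ∃ i, tc n v i = 0
    · obtain ⟨i, hzi⟩ := hz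
      exact Or.inr (Or.inr (Set.mem_iUnion.mpr ⟨i, hspan_of_zero v i hdet hzi⟩))
    · left
      push_neg at hz
      refine Set.mem_iUnion.mpr ⟨fun i => decide (0 < tc n v i), ?_⟩
      refine Set.mem_preimage.mpr ⟨det_Mm_flip_ne _ v hdet, fun i => ?_⟩
      rw [tc_flip]
      show 0 < dsg (fun i => decide (0 < tc n v i)) i * tc n v i
      by_cases hp : 0 < tc n v i
      · have hd : dsg (fun i => decide (0 < tc n v i)) i = 1 := by simp [dsg, hp]
        rw [hd, one_mul]
        exact hp
      · have hneg : tc n v i < 0 := lt_of_le_of_ne (not_lt.mp hp) (hz i)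
        have hd : dsg (fun i => decide (0 < tc n v i)) i = -1 := by simp [dsg, hp]
        rw [hd]
        linarith
  have hdisj : Pairwise (Function.onFun Disjoint
      fun ε : Fin n → Bool => flip ε ⁻¹' Apos) := by
    intro ε ε' hne
    refine Set.disjoint_left.mpr fun v hv hv' => hne ?_
    funext i
    have h1 : 0 < tc n (flip ε v) i := hv.2 i
    have h2 : 0 < tc n (flip ε' v) i := hv'.2 i
    rw [tc_flip] at h1 h2
    simp only at h1 h2
    by_cases hb : ε i <;> by_cases hb' : ε' i
    · rw [hb, hb']
    · exfalso
      rw [show dsg ε i = 1 from by simp [dsg, hb], one_mul] at h1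
      rw [show dsg ε' i = -1 from by simp [dsg, hb']] at h2
      linarith
    · exfalso
      rw [show dsg ε i = -1 from by simp [dsg, hb]] at h1
      rw [show dsg ε' i = 1 from by simp [dsg, hb'], one_mul] at h2
      linarith
    · rw [Bool.not_eq_true] at hb hb'
      rw [hb, hb']
  have hFμ : ∀ ε : Fin n → Bool, μ (flip ε ⁻¹' Apos) = μ Apos := fun ε =>
    (mp_flip ε).measure_preimage hAposm.nullMeasurableSet
  have hFm : ∀ ε : Fin n → Bool, MeasurableSet (flip ε ⁻¹' Apos) := fun ε =>
    hAposm.preimage (mp_flip ε).measurable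
  have hGnull : μ (Gdet ∪ ⋃ i, Nsp i) = 0 := by
    rw [measure_union_null_iff]
    exact ⟨hGdet0, measure_iUnion_null hNsp0⟩
  have huni : μ (⋃ ε : Fin n → Bool, flip ε ⁻¹' Apos) = 1 := by
    refine le_antisymm prob_le_one ?_
    calc (1 : ℝ≥0∞) = μ Set.univ := measure_univ.symm
      _ ≤ μ ((⋃ ε : Fin n → Bool, flip ε ⁻¹' Apos) ∪ (Gdet ∪ ⋃ i, Nsp i)) :=
          measure_mono hcover
      _ ≤ μ (⋃ ε : Fin n → Bool, flip ε ⁻¹' Apos) + μ (Gdet ∪ ⋃ i, Nsp i) :=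
          measure_union_le _ _
      _ = μ (⋃ ε : Fin n → Bool, flip ε ⁻¹' Apos) := by rw [hGnull, add_zero]
  have hcount : (2 ^ n : ℝ≥0∞) * μ Apos = 1 := by
    rw [← huni, measure_iUnion hdisj hFm, tsum_fintype]
    simp only [hFμ]
    rw [Finset.sum_const, nsmul_eq_mul]
    congr 1
    rw [Finset.card_univ, Fintype.card_fun]
    simp
  have hμS : μ S = μ Apos := by
    have h1 : μ S = μ A := by
      refine le_antisymm ?_ (measure_mono hAS)
      calc μ S ≤ μ (A ∪ Gdet) := measure_mono hSA
        _ = μ A := le_antisymm ((measure_union_le _ _).trans (by rw [hGdet0, add_zero]))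
            (measure_mono Set.subset_union_left)
    have h2 : μ A = μ Apos := by
      refine le_antisymm ?_ (measure_mono fun v hv => ⟨hv.1, fun i => (hv.2 i).le⟩)
      calc μ A ≤ μ (Apos ∪ ⋃ i, Nsp i) := measure_mono hAApos
        _ = μ Apos := le_antisymm ((measure_union_le _ _).trans
              (by rw [measure_iUnion_null hNsp0, add_zero]))
            (measure_mono Set.subset_union_left)
    rw [h1, h2]
  rw [hμS]
  refine (ENNReal.eq_div_iff ?_ ?_).mpr hcount
  · positivity
  · exact (ENNReal.pow_ne_top (by simp))
end

section
/- Let f : ℝ_{>0}^n → ℝ_{>0} be defined by f(x) = (Σ_{j=1}^m c_j²·x^{2β_j})^{1/2} with β₁,…,β_m ∈ ℤ^n and nonzero reals c₁,…,c_m, let α₁,…,αₙ ∈ ℤ^n and σ₁,…,σₙ > 0, and let ξ_{i,j} (1 ≤ i ≤ n, 0 ≤ j ≤ n) be i.i.d. standard Gaussian random variables. Then the probability that the random system ξ_{i,0}·f(x) + Σ_{j=1}^n ξ_{i,j}·σ_j·x^{α_j} = 0 (i = 1,…,n) has at least one solution x ∈ ℝ_{>0}^n is at most 2^{-n}. -/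
open MeasureTheory ProbabilityTheory
open scoped ENNReal BigOperators
open Matrix
open scoped NNReal

/-- The monomial `x^α = x₁^{α₁} ⋯ xₙ^{αₙ}` for an integer exponent vector `α`. -/
noncomputable def zmon {n : ℕ} (α : Fin n → ℤ) (x : Fin n → ℝ) : ℝ :=
  ∏ i, x i ^ α i


namespace ProbSolvAux


/-- Absolute continuity of finite product measures. -/
lemma pi_absolutelyContinuous {X : Type*} [MeasurableSpace X] :
    ∀ {k : ℕ} (μ ν : Fin k → Measure X), (∀ i, SigmaFinite (μ i)) → (∀ i, SigmaFinite (ν i)) →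
      (∀ i, μ i ≪ ν i) → Measure.pi μ ≪ Measure.pi ν := by
  intro k
  induction k with
  | zero =>
    intro μ ν _ _ _
    rw [Measure.pi_of_empty, Measure.pi_of_empty]
  | succ k ih =>
    intro μ ν hμ hν h
    haveI : ∀ i, SigmaFinite (μ i) := hμ
    haveI : ∀ i, SigmaFinite (ν i) := hν
    set e := MeasurableEquiv.piFinSuccAbove (fun _ : Fin (k + 1) => X) 0 with he
    have hμe := (measurePreserving_piFinSuccAbove μ 0).symm e
    have hνe := (measurePreserving_piFinSuccAbove ν 0).symm e
    rw [← hμe.map_eq, ← hνe.map_eq]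
    refine Measure.AbsolutelyContinuous.map ?_ e.symm.measurable
    exact (h 0).prod (ih _ _ (fun i => hμ _) (fun i => hν _) (fun i => h _))


variable {n : ℕ}

noncomputable def Mmat (ξ : Fin n → Fin (n + 1) → ℝ) : Matrix (Fin n) (Fin n) ℝ :=
  Matrix.of fun i j => ξ i j.succ

def bvec (ξ : Fin n → Fin (n + 1) → ℝ) : Fin n → ℝ := fun i => ξ i 0

noncomputable def sol (ξ : Fin n → Fin (n + 1) → ℝ) : Fin n → ℝ :=
  -((Mmat ξ)⁻¹ *ᵥ bvec ξ)

def sgn (b : Bool) : ℝ := if b then 1 else -1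

lemma sgn_mul_self (b : Bool) : sgn b * sgn b = 1 := by cases b <;> norm_num [sgn]

lemma sgn_sq (b : Bool) : sgn b ^ 2 = 1 := by cases b <;> norm_num [sgn]

lemma sgn_ne_zero (b : Bool) : sgn b ≠ 0 := by cases b <;> norm_num [sgn]

lemma sgn_inv (b : Bool) : (sgn b)⁻¹ = sgn b := by cases b <;> norm_num [sgn]

def Dset (ε : Fin n → Bool) : Set (Fin n → Fin (n + 1) → ℝ) :=
  {ξ | (Mmat ξ).det ≠ 0 ∧ ∀ j, 0 < sgn (ε j) * sol ξ j}

def Sset (n : ℕ) : Set (Fin n → Fin (n + 1) → ℝ) := {ξ | (Mmat ξ).det = 0}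

lemma continuous_Mmat : Continuous fun ξ : Fin n → Fin (n + 1) → ℝ => Mmat ξ :=
  continuous_pi fun i => continuous_pi fun j =>
    (continuous_apply (Fin.succ j)).comp (continuous_apply i)

lemma measurable_sol (j : Fin n) :
    Measurable fun ξ : Fin n → Fin (n + 1) → ℝ => sol ξ j := by
  have hd : Measurable fun ξ : Fin n → Fin (n + 1) → ℝ => (Mmat ξ).det :=
    continuous_Mmat.matrix_det.measurable
  have ha : ∀ k, Measurable fun ξ : Fin n → Fin (n + 1) → ℝ => (Mmat ξ).adjugate j k :=
    fun k => (((continuous_apply k).comp (continuous_apply j)).comp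
      continuous_Mmat.matrix_adjugate).measurable
  have hb : ∀ k, Measurable fun ξ : Fin n → Fin (n + 1) → ℝ => bvec ξ k := fun k =>
    (show Continuous fun ξ : Fin n → Fin (n + 1) → ℝ => ξ k 0 from
      (continuous_apply (0 : Fin (n + 1))).comp (continuous_apply k)).measurable
  have : (fun ξ : Fin n → Fin (n + 1) → ℝ => sol ξ j)
      = fun ξ => -(((Mmat ξ).det)⁻¹ * ∑ k, (Mmat ξ).adjugate j k * bvec ξ k) := by
    funext ξ
    simp only [sol, Matrix.inv_def, Ring.inverse_eq_inv', Pi.neg_apply,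
      Matrix.smul_mulVec, Pi.smul_apply, smul_eq_mul, Matrix.mulVec, dotProduct]
  rw [this]
  exact (hd.inv.mul (Finset.measurable_sum _ fun k _ => (ha k).mul (hb k))).neg

lemma measurableSet_Dset (ε : Fin n → Bool) : MeasurableSet (Dset ε) := by
  have hd : Measurable fun ξ : Fin n → Fin (n + 1) → ℝ => (Mmat ξ).det :=
    continuous_Mmat.matrix_det.measurable
  have h1 : MeasurableSet {ξ : Fin n → Fin (n + 1) → ℝ | (Mmat ξ).det ≠ 0} :=
    (hd (measurableSet_singleton 0)).compl
  have h2 : ∀ j, MeasurableSet {ξ : Fin n → Fin (n + 1) → ℝ | 0 < sgn (ε j) * sol ξ j} :=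
    fun j => measurableSet_lt measurable_const ((measurable_sol j).const_mul _)
  have : Dset ε = {ξ : Fin n → Fin (n + 1) → ℝ | (Mmat ξ).det ≠ 0}
      ∩ ⋂ j, {ξ | 0 < sgn (ε j) * sol ξ j} := by
    ext ξ; simp [Dset, Set.mem_iInter]
  rw [this]
  exact h1.inter (MeasurableSet.iInter h2)

noncomputable def sflip (ε : Fin n → Bool) (ξ : Fin n → Fin (n + 1) → ℝ) :
    Fin n → Fin (n + 1) → ℝ :=
  fun i j => Fin.cases (1 : ℝ) (fun k => sgn (ε k)) j * ξ i j

lemma measurePreserving_sflip (ε : Fin n → Bool) :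
    MeasurePreserving (sflip ε)
      (Measure.pi fun _ : Fin n => Measure.pi fun _ : Fin (n + 1) => gaussianReal 0 1)
      (Measure.pi fun _ : Fin n => Measure.pi fun _ : Fin (n + 1) => gaussianReal 0 1) := by
  have key : ∀ c : ℝ, c ^ 2 = 1 →
      MeasurePreserving (fun x : ℝ => c * x) (gaussianReal 0 1) (gaussianReal 0 1) := by
    intro c hc
    refine ⟨measurable_const_mul c, ?_⟩
    have h := gaussianReal_map_const_mul (μ := 0) (v := 1) c
    have h2 : (⟨c ^ 2, sq_nonneg c⟩ : ℝ≥0) = 1 := by ext; simp [hc]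
    simp only [mul_zero, mul_one] at h
    rw [h]
    congr 1
  exact measurePreserving_pi _ _ fun i =>
    measurePreserving_pi _ _ fun j => key _ (by
      induction j using Fin.cases with
      | zero => simp
      | succ k => simp [sgn_sq])

lemma bvec_sflip (ε : Fin n → Bool) (ξ : Fin n → Fin (n + 1) → ℝ) :
    bvec (sflip ε ξ) = bvec ξ := by
  funext i; simp [bvec, sflip]

lemma Mmat_sflip (ε : Fin n → Bool) (ξ : Fin n → Fin (n + 1) → ℝ) :
    Mmat (sflip ε ξ) = Mmat ξ * Matrix.diagonal (fun j => sgn (ε j)) := by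
  ext i j
  simp [Mmat, sflip, Matrix.mul_diagonal, mul_comm]

lemma sflip_preimage_Dset (ε : Fin n → Bool) :
    sflip ε ⁻¹' Dset ε = Dset (fun _ => true) := by
  have hdiag_inv : (Matrix.diagonal (fun j => sgn (ε j)))⁻¹
      = Matrix.diagonal (fun j => sgn (ε j)) := by
    refine Matrix.inv_eq_right_inv ?_
    simp [Matrix.diagonal_mul_diagonal, sgn_mul_self]
  ext ξ
  have hdet : (Mmat (sflip ε ξ)).det = (Mmat ξ).det * ∏ j, sgn (ε j) := by
    rw [Mmat_sflip, Matrix.det_mul, Matrix.det_diagonal]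
  have hprod_ne : (∏ j, sgn (ε j)) ≠ 0 := Finset.prod_ne_zero_iff.mpr fun j _ => sgn_ne_zero _
  have hsol : ∀ j, sol (sflip ε ξ) j = sgn (ε j) * sol ξ j := by
    intro j
    simp only [sol, Mmat_sflip, bvec_sflip, Matrix.mul_inv_rev, hdiag_inv, Pi.neg_apply,
      ← Matrix.mulVec_mulVec, Matrix.mulVec_diagonal]
    ring
  have hst : sgn true = (1 : ℝ) := rfl
  simp only [Set.mem_preimage, Dset, Set.mem_setOf_eq, hdet, hsol, hst]
  constructor
  · rintro ⟨h1, h2⟩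
    refine ⟨fun h => h1 (by rw [h, zero_mul]), fun j => ?_⟩
    have := h2 j
    rw [← mul_assoc, sgn_mul_self, one_mul] at this
    simpa using this
  · rintro ⟨h1, h2⟩
    refine ⟨mul_ne_zero h1 hprod_ne, fun j => ?_⟩
    rw [← mul_assoc, sgn_mul_self, one_mul]
    simpa using h2 j

lemma eval_charpoly {k : ℕ} (A : Matrix (Fin k) (Fin k) ℝ) (t : ℝ) :
    A.charpoly.eval t = (t • (1 : Matrix (Fin k) (Fin k) ℝ) - A).det := by
  rw [Matrix.charpoly, show Polynomial.eval t = Polynomial.evalRingHom t from rfl,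
    RingHom.map_det]
  congr 1
  ext i j
  by_cases h : i = j
  · subst h
    simp [Matrix.charmatrix_apply_eq, Matrix.map_apply, Matrix.one_apply_eq]
  · simp [Matrix.charmatrix_apply_ne _ _ _ h, Matrix.map_apply, Matrix.one_apply_ne h,
      Matrix.one_apply_ne' (Ne.symm h)]

lemma finite_sections {k : ℕ} (A : Matrix (Fin k) (Fin k) ℝ) :
    {t : ℝ | (A + t • (1 : Matrix (Fin k) (Fin k) ℝ)).det = 0}.Finite := by
  have hsub : {t : ℝ | (A + t • (1 : Matrix (Fin k) (Fin k) ℝ)).det = 0}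
      ⊆ {t : ℝ | ((-A).charpoly).IsRoot t} := by
    intro t ht
    simp only [Set.mem_setOf_eq, Polynomial.IsRoot, eval_charpoly, sub_neg_eq_add]
    rw [add_comm]
    exact ht
  exact (Polynomial.finite_setOf_isRoot (Matrix.charpoly_monic (-A)).ne_zero).subset hsub

lemma volume_Sset : (volume : Measure (Fin n → Fin (n + 1) → ℝ)) (Sset n) = 0 := by
  classical
  set Ω := (Fin n → Fin (n + 1) → ℝ)
  set e0 : Ω := fun i j => if j = i.succ then 1 else 0 with he0
  have hMadd : ∀ (ξ : Ω) (t : ℝ), Mmat (ξ + t • e0) = Mmat ξ + t • (1 : Matrix (Fin n) (Fin n) ℝ) := by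
    intro ξ t
    ext i j
    have hrfl : Mmat (ξ + t • e0) i j = ξ i j.succ + t * e0 i j.succ := rfl
    rw [hrfl]
    by_cases h : i = j
    · subst h
      simp [Mmat, he0, Matrix.one_apply_eq]
    · have h2 : ¬ (j.succ = i.succ) := fun hh => h (Fin.succ_injective _ hh).symm
      simp [Mmat, he0, h2, Matrix.one_apply_ne h]
  have hcont : Continuous fun p : Ω × ℝ => (Mmat p.1 + p.2 • (1 : Matrix (Fin n) (Fin n) ℝ)).det := by
    refine Continuous.matrix_det ?_
    refine Continuous.add (continuous_Mmat.comp continuous_fst) ?_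
    exact continuous_pi fun i => continuous_pi fun j => continuous_snd.mul continuous_const
  set U : Set (Ω × ℝ) := {p | (Mmat p.1 + p.2 • (1 : Matrix (Fin n) (Fin n) ℝ)).det = 0} with hU
  have hUm : MeasurableSet U := hcont.measurable (measurableSet_singleton 0)
  have hS : MeasurableSet (Sset n) :=
    (continuous_Mmat.matrix_det.measurable) (measurableSet_singleton 0)
  have h1 : ((volume : Measure Ω).prod (volume : Measure ℝ)) U = 0 := by
    rw [Measure.prod_apply hUm]
    have hsec : ∀ ξ : Ω, (volume : Measure ℝ) (Prod.mk ξ ⁻¹' U) = 0 := by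
      intro ξ
      exact (finite_sections (Mmat ξ)).measure_zero _
    simp [hsec]
  have h2 : ((volume : Measure Ω).prod (volume : Measure ℝ)) U
      = (volume : Measure Ω) (Sset n) * ∞ := by
    rw [Measure.prod_apply_symm hUm]
    have hsec : ∀ t : ℝ, (volume : Measure Ω) ((fun ξ : Ω => (ξ, t)) ⁻¹' U)
        = (volume : Measure Ω) (Sset n) := by
      intro t
      have : ((fun ξ : Ω => (ξ, t)) ⁻¹' U) = (fun ξ : Ω => ξ + t • e0) ⁻¹' (Sset n) := by
        ext ξ
        simp [hU, Sset, hMadd]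
        rw [Set.mem_setOf_eq, hMadd]
      rw [this, measure_preimage_add_right]
    simp_rw [hsec]
    rw [lintegral_const, Real.volume_univ]
  rw [h1] at h2
  rcases mul_eq_zero.mp h2.symm with h | h
  · exact h
  · exact absurd h ENNReal.top_ne_zero

lemma gauss_null_Sset :
    (Measure.pi fun _ : Fin n => Measure.pi fun _ : Fin (n + 1) => gaussianReal 0 1)
      (Sset n) = 0 := by
  have hrow : (Measure.pi fun _ : Fin (n + 1) => gaussianReal 0 1)
      ≪ (volume : Measure (Fin (n + 1) → ℝ)) := by
    rw [MeasureTheory.volume_pi]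
    exact pi_absolutelyContinuous _ _ (fun _ => inferInstance) (fun _ => inferInstance)
      (fun _ => gaussianReal_absolutelyContinuous 0 one_ne_zero)
  have hac : (Measure.pi fun _ : Fin n => Measure.pi fun _ : Fin (n + 1) => gaussianReal 0 1)
      ≪ (volume : Measure (Fin n → Fin (n + 1) → ℝ)) := by
    rw [MeasureTheory.volume_pi]
    exact pi_absolutelyContinuous _ _ (fun _ => inferInstance) (fun _ => inferInstance)
      (fun _ => hrow)
  exact hac volume_Sset

lemma event_subset (n m : ℕ) (β : Fin m → Fin n → ℤ) (c : Fin m → ℝ) (hc : ∀ j, c j ≠ 0)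
    (α : Fin n → Fin n → ℤ) (σ : Fin n → ℝ) (hσ : ∀ j, 0 < σ j) :
    {ξ : Fin n → Fin (n + 1) → ℝ | ∃ x : Fin n → ℝ, (∀ i, 0 < x i) ∧
        ∀ i, ξ i 0 * Real.sqrt (∑ j, c j ^ 2 * zmon (fun k => 2 * β j k) x)
            + (∑ j : Fin n, ξ i j.succ * σ j * zmon (α j) x) = 0}
      ⊆ Sset n ∪ Dset (fun _ => true) := by
  rintro ξ ⟨x, hx, heq⟩
  by_cases hdet : (Mmat ξ).det = 0
  · exact Or.inl hdet
  right
  have hz : ∀ γ : Fin n → ℤ, 0 < zmon γ x := fun γ =>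
    Finset.prod_pos fun i _ => zpow_pos (hx i) _
  have hinv : (Mmat ξ)⁻¹ * Mmat ξ = 1 := Matrix.nonsing_inv_mul _ (isUnit_iff_ne_zero.mpr hdet)
  have huniq : ∀ u : Fin n → ℝ, Mmat ξ *ᵥ u = -(bvec ξ) → u = sol ξ := by
    intro u hu
    have h2 : (Mmat ξ)⁻¹ *ᵥ (Mmat ξ *ᵥ u) = (Mmat ξ)⁻¹ *ᵥ (-(bvec ξ)) := by rw [hu]
    rw [Matrix.mulVec_mulVec, hinv, Matrix.one_mulVec, Matrix.mulVec_neg] at h2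
    exact h2
  rcases Nat.eq_zero_or_pos m with hm | hm
  · subst hm
    have hF : Real.sqrt (∑ j : Fin 0, c j ^ 2 * zmon (fun k => 2 * β j k) x) = 0 := by
      simp
    set w : Fin n → ℝ := fun j => σ j * zmon (α j) x with hw
    have hMw : Mmat ξ *ᵥ w = 0 := by
      funext i
      have h := heq i
      rw [hF, mul_zero, zero_add] at h
      simpa [Matrix.mulVec, dotProduct, Mmat, hw, mul_assoc] using h
    have hw0 : w = 0 := by
      have h2 := congrArg (fun v => (Mmat ξ)⁻¹ *ᵥ v) hMw
      simpa [Matrix.mulVec_mulVec, hinv, Matrix.one_mulVec, Matrix.mulVec_zero] using h2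
    rcases Nat.eq_zero_or_pos n with hn | hn
    · subst hn
      exact ⟨hdet, fun j => j.elim0⟩
    · exfalso
      have hzero : w ⟨0, hn⟩ = 0 := by rw [hw0]; rfl
      have hpos : 0 < w ⟨0, hn⟩ := mul_pos (hσ _) (hz _)
      rw [hzero] at hpos
      exact lt_irrefl _ hpos
  · set F := Real.sqrt (∑ j, c j ^ 2 * zmon (fun k => 2 * β j k) x) with hFdef
    have hFpos : 0 < F := by
      apply Real.sqrt_pos.mpr
      haveI : Nonempty (Fin m) := Fin.pos_iff_nonempty.mp hm
      exact Finset.sum_pos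
        (fun j _ => mul_pos (pow_two_pos_of_ne_zero (hc j)) (hz _))
        Finset.univ_nonempty
    set u : Fin n → ℝ := fun j => σ j * zmon (α j) x / F with hu
    have hupos : ∀ j, 0 < u j := fun j => div_pos (mul_pos (hσ j) (hz _)) hFpos
    have hMu : Mmat ξ *ᵥ u = -(bvec ξ) := by
      funext i
      have h := heq i
      have hSi : ∑ j, ξ i j.succ * σ j * zmon (α j) x = -(ξ i 0) * F := by linarith
      have hentry : (Mmat ξ *ᵥ u) i = (∑ j, ξ i j.succ * σ j * zmon (α j) x) / F := by
        rw [Finset.sum_div]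
        simp only [Matrix.mulVec, dotProduct, Mmat, Matrix.of_apply, hu]
        exact Finset.sum_congr rfl fun j _ => by ring
      rw [hentry, hSi, Pi.neg_apply, bvec]
      field_simp
    have husol := huniq u hMu
    refine ⟨hdet, fun j => ?_⟩
    have : sgn true = (1 : ℝ) := rfl
    rw [this, one_mul, ← husol]
    exact hupos j

end ProbSolvAux

/-- **Lemma (probability of solvability).** With `f(x) = (∑_j c_j² x^{2β_j})^{1/2}`
(`c_j ≠ 0`), exponents `α₁, …, αₙ ∈ ℤⁿ`, weights `σ_j > 0` and i.i.d. standard Gaussians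
`ξ_{i,j}` (`1 ≤ i ≤ n`, `0 ≤ j ≤ n`), the probability that the random system
`ξ_{i,0} f(x) + ∑_j ξ_{i,j} σ_j x^{α_j} = 0` (`i = 1, …, n`) has a solution in `ℝ_{>0}ⁿ`
is at most `2^{-n}`. -/
theorem probability_solvable_le (n m : ℕ)
    (β : Fin m → Fin n → ℤ) (c : Fin m → ℝ) (hc : ∀ j, c j ≠ 0)
    (α : Fin n → Fin n → ℤ) (σ : Fin n → ℝ) (hσ : ∀ j, 0 < σ j) :
    (Measure.pi fun _ : Fin n => Measure.pi fun _ : Fin (n + 1) => gaussianReal 0 1)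
      {ξ : Fin n → Fin (n + 1) → ℝ | ∃ x : Fin n → ℝ, (∀ i, 0 < x i) ∧
        ∀ i, ξ i 0 * Real.sqrt (∑ j, c j ^ 2 * zmon (fun k => 2 * β j k) x)
            + (∑ j : Fin n, ξ i j.succ * σ j * zmon (α j) x) = 0}
    ≤ 1 / 2 ^ n := by
  classical
  set μ := (Measure.pi fun _ : Fin n => Measure.pi fun _ : Fin (n + 1) => gaussianReal 0 1)
    with hμdef
  have hS : μ (ProbSolvAux.Sset n) = 0 := ProbSolvAux.gauss_null_Sset
  have hD : ∀ ε : Fin n → Bool,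
      μ (ProbSolvAux.Dset ε) = μ (ProbSolvAux.Dset fun _ => true) := by
    intro ε
    rw [← ProbSolvAux.sflip_preimage_Dset ε]
    exact ((ProbSolvAux.measurePreserving_sflip ε).measure_preimage
      (ProbSolvAux.measurableSet_Dset ε).nullMeasurableSet).symm
  have hdisj : Pairwise (Function.onFun Disjoint fun ε : Fin n → Bool => ProbSolvAux.Dset ε) := by
    intro ε ε' hne
    rw [Function.onFun, Set.disjoint_left]
    rintro ξ ⟨h1, h2⟩ ⟨h1', h2'⟩
    obtain ⟨j, hj⟩ := Function.ne_iff.mp hne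
    have a := h2 j
    have b := h2' j
    cases hε : ε j <;> cases hε' : ε' j <;> rw [hε] at a hj <;> rw [hε'] at b hj
    · exact hj rfl
    · simp only [ProbSolvAux.sgn, if_true, if_false, Bool.false_eq_true] at a b
      norm_num at a b
      linarith
    · simp only [ProbSolvAux.sgn, if_true, if_false, Bool.false_eq_true] at a b
      norm_num at a b
      linarith
    · exact hj rfl
  have hsum : ∑ ε : Fin n → Bool, μ (ProbSolvAux.Dset ε) = μ (⋃ ε, ProbSolvAux.Dset ε) := by
    have h := measure_iUnion (μ := μ) hdisj fun ε => ProbSolvAux.measurableSet_Dset ε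
    rw [tsum_fintype] at h
    exact h.symm
  have hkey : (2 ^ n : ℝ≥0∞) * μ (ProbSolvAux.Dset fun _ => true) ≤ 1 := by
    have hcard : (Finset.univ : Finset (Fin n → Bool)).card = 2 ^ n := by
      rw [Finset.card_univ, Fintype.card_fun]
      simp
    calc (2 ^ n : ℝ≥0∞) * μ (ProbSolvAux.Dset fun _ => true)
        = ∑ _ε : Fin n → Bool, μ (ProbSolvAux.Dset fun _ => true) := by
          rw [Finset.sum_const, hcard, nsmul_eq_mul]
          simp
      _ = ∑ ε : Fin n → Bool, μ (ProbSolvAux.Dset ε) :=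
          Finset.sum_congr rfl fun ε _ => (hD ε).symm
      _ = μ (⋃ ε, ProbSolvAux.Dset ε) := hsum
      _ ≤ 1 := prob_le_one
  have hDbound : μ (ProbSolvAux.Dset fun _ => true) ≤ 1 / 2 ^ n := by
    rw [ENNReal.le_div_iff_mul_le (Or.inl (pow_ne_zero _ two_ne_zero)) (Or.inl (ENNReal.pow_ne_top ENNReal.ofNat_ne_top))]
    rw [mul_comm]
    exact hkey
  calc μ _ ≤ μ (ProbSolvAux.Sset n ∪ ProbSolvAux.Dset fun _ => true) :=
        measure_mono (ProbSolvAux.event_subset n m β c hc α σ hσ)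
    _ ≤ μ (ProbSolvAux.Sset n) + μ (ProbSolvAux.Dset fun _ => true) := measure_union_le _ _
    _ = μ (ProbSolvAux.Dset fun _ => true) := by rw [hS, zero_add]
    _ ≤ 1 / 2 ^ n := hDbound
end

section
/- Let Ω ⊆ ℝ^n be open, let φ : Ω → ℝ^t be differentiable with φ(x) ≠ 0 for all x ∈ Ω, and set ψ(x) = φ(x)/‖φ(x)‖. Let Ξ be a real n×t matrix and define f : Ω → ℝ^n by f(x) = Ξ·φ(x). If x ∈ Ω satisfies f(x) = 0 and the derivative D_xψ : ℝ^n → ℝ^t has rank < n, then the Jacobian matrix D_x f is singular (not invertible); i.e., every zero of f at which D_xψ is rank-deficient is a degenerate zero. -/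
open Matrix
open scoped BigOperators

/-- **Lemma (rank-deficient points give degenerate zeros).** Let `Ω ⊆ ℝⁿ` be open,
`φ : Ω → ℝᵗ` differentiable and nowhere zero on `Ω`, and `ψ = φ/‖φ‖` (Euclidean norm).
Let `Ξ` be a real `n × t` matrix and `f(y) = Ξ·φ(y)`. If `x ∈ Ω` satisfies `f(x) = 0` and
`rank D_xψ < n`, then the Jacobian matrix `D_x f` is singular. -/
theorem degenerate_of_rank_deficient (n t : ℕ) (Ω : Set (Fin n → ℝ)) (hΩ : IsOpen Ω)
    (φ : (Fin n → ℝ) → EuclideanSpace ℝ (Fin t))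
    (hφ : DifferentiableOn ℝ φ Ω) (hφ0 : ∀ y ∈ Ω, φ y ≠ 0)
    (Ξ : Matrix (Fin n) (Fin t) ℝ) (x : Fin n → ℝ) (hx : x ∈ Ω)
    (hzero : Ξ.mulVec (φ x) = 0)
    (hrank : LinearMap.rank
        ((fderiv ℝ (fun y => (‖φ y‖⁻¹ : ℝ) • φ y) x).toLinearMap) < (n : Cardinal)) :
    (Matrix.of fun i j : Fin n =>
        fderiv ℝ (fun y => Ξ.mulVec (φ y) i) x (Pi.single j 1)).det = 0 := by
  by_contra hdet
  -- basic differentiability facts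
  have hφx : DifferentiableAt ℝ φ x := hφ.differentiableAt (hΩ.mem_nhds hx)
  have hφ0x : φ x ≠ 0 := hφ0 x hx
  have hnorm : DifferentiableAt ℝ (fun y => ‖φ y‖) x := hφx.norm ℝ hφ0x
  have hc : DifferentiableAt ℝ (fun y => (‖φ y‖⁻¹ : ℝ)) x :=
    hnorm.inv (norm_ne_zero_iff.mpr hφ0x)
  -- the continuous linear map given by Ξ
  let T : EuclideanSpace ℝ (Fin t) →L[ℝ] (Fin n → ℝ) :=
    LinearMap.toContinuousLinearMap ((Matrix.mulVecLin Ξ).comp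
      (WithLp.linearEquiv 2 ℝ (Fin t → ℝ)).toLinearMap)
  have hT : ∀ v, T v = Ξ.mulVec v := fun v => rfl
  -- the Jacobian linear map of f
  set L : (Fin n → ℝ) →L[ℝ] (Fin n → ℝ) := T.comp (fderiv ℝ φ x) with hL
  -- the matrix in the statement is the matrix of L
  have hM : (Matrix.of fun i j : Fin n =>
        fderiv ℝ (fun y => Ξ.mulVec (φ y) i) x (Pi.single j 1)) =
      LinearMap.toMatrix' L.toLinearMap := by
    ext i j
    have hfi : (fun y => Ξ.mulVec (φ y) i) =
        (⇑((ContinuousLinearMap.proj i : (Fin n → ℝ) →L[ℝ] ℝ).comp T)) ∘ φ := rfl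
    rw [Matrix.of_apply, hfi, fderiv_comp x
      (((ContinuousLinearMap.proj i : (Fin n → ℝ) →L[ℝ] ℝ).comp T).differentiableAt) hφx,
      ContinuousLinearMap.fderiv, LinearMap.toMatrix'_apply]
    rfl
  -- det ≠ 0 gives surjectivity of L
  have hMdet : ((LinearMap.toMatrix' L.toLinearMap : Matrix (Fin n) (Fin n) ℝ)).det ≠ 0 := by
    rwa [hM] at hdet
  have hLv : ∀ v, L v = (LinearMap.toMatrix' L.toLinearMap).mulVec v := by
    intro v
    rw [← Matrix.toLin'_apply, Matrix.toLin'_toMatrix']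
    rfl
  have hLsurj : Function.Surjective L := by
    intro v
    refine ⟨(LinearMap.toMatrix' L.toLinearMap)⁻¹.mulVec v, ?_⟩
    rw [hLv, Matrix.mulVec_mulVec,
      Matrix.mul_nonsing_inv _ (isUnit_iff_ne_zero.mpr hMdet), Matrix.one_mulVec]
  -- compute the derivative of ψ
  have hψ : fderiv ℝ (fun y => (‖φ y‖⁻¹ : ℝ) • φ y) x =
      (‖φ x‖⁻¹ : ℝ) • fderiv ℝ φ x + (fderiv ℝ (fun y => (‖φ y‖⁻¹ : ℝ)) x).smulRight (φ x) :=
    fderiv_smul hc hφx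
  -- T ∘ Dψ = c • L
  have hTφx : T (φ x) = 0 := (hT (φ x)).trans hzero
  have hTψ : T.comp (fderiv ℝ (fun y => (‖φ y‖⁻¹ : ℝ) • φ y) x) = (‖φ x‖⁻¹ : ℝ) • L := by
    rw [hψ]
    refine ContinuousLinearMap.ext fun v => ?_
    simp only [ContinuousLinearMap.comp_apply, ContinuousLinearMap.add_apply,
      ContinuousLinearMap.smul_apply, ContinuousLinearMap.smulRight_apply, hL, map_add,
      _root_.map_smul, hTφx, smul_zero, add_zero]
  -- hence T ∘ Dψ is surjective
  have hcne : (‖φ x‖⁻¹ : ℝ) ≠ 0 := inv_ne_zero (norm_ne_zero_iff.mpr hφ0x)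
  have hTψsurj : Function.Surjective (T.comp (fderiv ℝ (fun y => (‖φ y‖⁻¹ : ℝ) • φ y) x)) := by
    rw [hTψ]
    intro v
    obtain ⟨w, hw⟩ := hLsurj ((‖φ x‖⁻¹ : ℝ)⁻¹ • v)
    refine ⟨w, ?_⟩
    rw [ContinuousLinearMap.smul_apply, hw, smul_smul, mul_inv_cancel₀ hcne, one_smul]
  -- rank contradiction
  have h1 : LinearMap.rank ((T.comp
      (fderiv ℝ (fun y => (‖φ y‖⁻¹ : ℝ) • φ y) x)).toLinearMap) = (n : Cardinal) := by
    have := rank_range_of_surjective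
      ((T.comp (fderiv ℝ (fun y => (‖φ y‖⁻¹ : ℝ) • φ y) x)).toLinearMap) hTψsurj
    rw [LinearMap.rank, this, rank_fun']
    simp
  have h2 : LinearMap.rank ((T.comp
      (fderiv ℝ (fun y => (‖φ y‖⁻¹ : ℝ) • φ y) x)).toLinearMap) ≤
      LinearMap.rank ((fderiv ℝ (fun y => (‖φ y‖⁻¹ : ℝ) • φ y) x).toLinearMap) := by
    exact LinearMap.rank_comp_le_right _ _
  rw [h1] at h2
  exact absurd (lt_of_le_of_lt h2 hrank) (lt_irrefl _)
end

section
/- Let A ⊆ ℕ be a finite set of cardinality t with 0 ∈ A, define φ : (0,1) → ℝ^A by φ(x) = (x^α)_{α∈A} and ψ(x) = φ(x)/‖φ(x)‖ (Euclidean norm). Then for every x ∈ (0,1), ‖ψ'(x)‖ ≤ √t · ‖φ'(x)‖₁/‖φ(x)‖₁, and the right-hand side equals √t times the derivative of x ↦ ln ‖φ(x)‖₁. -/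
set_option maxHeartbeats 1000000

open scoped BigOperators RealInnerProductSpace

/-- **Lemma (pointwise bound in the univariate case).** Let `A ⊆ ℕ` be finite with
`|A| = t` and `0 ∈ A`, let `φ(x) = (x^α)_{α ∈ A}` and `ψ = φ/‖φ‖` (Euclidean norm).
Then for every `x ∈ (0,1)`, `‖ψ'(x)‖ ≤ √t · ‖φ'(x)‖₁/‖φ(x)‖₁`, and the right-hand side
equals `√t` times the derivative of `x ↦ ln ‖φ(x)‖₁`. -/
theorem deriv_normalized_l1_bound (A : Finset ℕ) (t : ℕ) (ht : A.card = t) (h0 : 0 ∈ A)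
    (φ : ℝ → EuclideanSpace ℝ {a // a ∈ A}) (hφ : ∀ x, φ x = WithLp.toLp 2 (fun a => x ^ (a.1 : ℕ))) :
    ∀ x ∈ Set.Ioo (0 : ℝ) 1,
      ‖deriv (fun y => (‖φ y‖⁻¹ : ℝ) • φ y) x‖
        ≤ Real.sqrt t * (∑ a : {a // a ∈ A}, |deriv φ x a|)
            / (∑ a : {a // a ∈ A}, |φ x a|)
      ∧ Real.sqrt t * (∑ a : {a // a ∈ A}, |deriv φ x a|)
            / (∑ a : {a // a ∈ A}, |φ x a|)
        = Real.sqrt t * deriv (fun y => Real.log (∑ a : {a // a ∈ A}, |φ y a|)) x := by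
  have hφ' : φ = fun z => (WithLp.toLp 2 (fun a => z ^ (a.1 : ℕ)) : EuclideanSpace ℝ {a // a ∈ A}) :=
    funext hφ
  subst hφ'
  intro x hx
  obtain ⟨hx0, hx1⟩ := hx
  set ι := {a // a ∈ A}
  set φ : ℝ → EuclideanSpace ℝ ι := fun z => WithLp.toLp 2 (fun a => z ^ (a.1 : ℕ)) with hφdef
  -- derivative of φ
  set v : EuclideanSpace ℝ ι := WithLp.toLp 2 (fun a => (a.1 : ℝ) * x ^ (a.1 - 1)) with hvdef
  have hu : HasDerivAt φ v x := by
    have hg : HasDerivAt (fun z : ℝ => fun a : ι => z ^ (a.1 : ℕ))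
        (fun a : ι => (a.1 : ℝ) * x ^ (a.1 - 1)) x :=
      hasDerivAt_pi.2 fun a => hasDerivAt_pow _ _
    exact ((PiLp.continuousLinearEquiv 2 ℝ (fun _ : ι => ℝ)).symm.toContinuousLinearMap
      |>.hasFDerivAt.comp_hasDerivAt x hg)
  set u : EuclideanSpace ℝ ι := φ x with hudef
  have hu1 : u ⟨0, h0⟩ = 1 := by simp [hudef, hφdef]
  have hune : u ≠ 0 := by
    intro h
    have : (0 : ℝ) = 1 := by rw [← hu1, h]; rfl
    norm_num at this
  have npos : (0 : ℝ) < ‖u‖ := norm_pos_iff.2 hune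
  set n : ℝ := ‖u‖ with hndef
  -- derivative of the norm
  have hn2 : HasDerivAt (fun y => ‖φ y‖ ^ 2) (2 * ⟪u, v⟫) x := hu.norm_sq
  have hnun : ‖u‖ ≠ 0 := ne_of_gt npos
  have hn0 : n ≠ 0 := ne_of_gt npos
  have hnorm : HasDerivAt (fun y => ‖φ y‖) (⟪u, v⟫ / n) x := by
    have h3 := (Real.hasDerivAt_sqrt (by positivity : (‖u‖ ^ 2 : ℝ) ≠ 0)).comp x hn2
    simp only [Function.comp_def, Real.sqrt_sq (norm_nonneg _)] at h3
    have hfun : (fun y => ‖φ y‖) = fun y => √(‖φ y‖ ^ 2) :=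
      funext fun y => (Real.sqrt_sq (norm_nonneg _)).symm
    rw [hfun]
    exact h3.congr_deriv (by rw [Real.sqrt_sq (norm_nonneg u), ← hndef]; field_simp <;> ring_nf)
  set d : ℝ := ⟪u, v⟫ / n with hddef
  have hinv : HasDerivAt (fun y => (‖φ y‖)⁻¹) (-d / n ^ 2) x := hnorm.inv (ne_of_gt npos)
  have hψ : HasDerivAt (fun y => (‖φ y‖⁻¹ : ℝ) • φ y)
      (n⁻¹ • v + (-d / n ^ 2) • u) x := hinv.smul hu
  set w : EuclideanSpace ℝ ι := n⁻¹ • v + (-d / n ^ 2) • u with hwdef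
  have hderiv : deriv (fun y => (‖φ y‖⁻¹ : ℝ) • φ y) x = w := hψ.deriv
  -- orthogonality and the projection bound
  have horth : ⟪w, u⟫ = 0 := by
    rw [hwdef, inner_add_left, real_inner_smul_left, real_inner_smul_left,
      real_inner_self_eq_norm_sq, real_inner_comm u v, hddef, ← hndef]
    field_simp
    ring
  have hvw : v = n • w + (d / n) • u := by
    rw [hwdef, smul_add, smul_smul, smul_smul,
      show n * n⁻¹ = 1 from mul_inv_cancel₀ hn0, one_smul,
      show n * (-d / n ^ 2) = -(d / n) from by field_simp]
    module
  have hkey : n * ‖w‖ ≤ ‖v‖ := by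
    have hsq : ‖v‖ ^ 2 = n ^ 2 * ‖w‖ ^ 2 + d ^ 2 := by
      rw [hvw, @norm_add_sq_real, real_inner_smul_left, real_inner_smul_right, horth,
        norm_smul, norm_smul]
      simp only [Real.norm_eq_abs, mul_pow, sq_abs, mul_zero, div_pow, ← hndef]
      field_simp
      ring
    nlinarith [norm_nonneg v, norm_nonneg w, mul_nonneg (le_of_lt npos) (norm_nonneg w),
      sq_nonneg d]
  -- ℓ¹ quantities
  set S : ℝ := ∑ a : ι, x ^ (a.1 : ℕ) with hSdef
  set S' : ℝ := ∑ a : ι, (a.1 : ℝ) * x ^ (a.1 - 1) with hS'def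
  have habs_u : ∀ a : ι, |u a| = x ^ (a.1 : ℕ) := fun a =>
    abs_of_nonneg (pow_nonneg hx0.le _)
  have habs_v : ∀ a : ι, |v a| = (a.1 : ℝ) * x ^ (a.1 - 1) := fun a =>
    abs_of_nonneg (by positivity)
  have hSu : (∑ a : ι, |u a|) = S := by
    exact Finset.sum_congr rfl fun a _ => habs_u a
  have hSv : (∑ a : ι, |v a|) = S' := by
    exact Finset.sum_congr rfl fun a _ => habs_v a
  have hSpos : 0 < S := by
    refine Finset.sum_pos' (fun a _ => pow_nonneg hx0.le _) ⟨⟨0, h0⟩, Finset.mem_univ _, by simp⟩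
  have hS'nonneg : 0 ≤ S' := Finset.sum_nonneg fun a _ => by positivity
  have htpos : 0 < Real.sqrt t := by
    have : 0 < t := ht ▸ Finset.card_pos.2 ⟨0, h0⟩
    exact Real.sqrt_pos.2 (by exact_mod_cast this)
  -- ℓ² ≤ ℓ¹ for v
  have hv_le : ‖v‖ ≤ S' := by
    rw [EuclideanSpace.norm_eq]
    have h1 : (∑ a : ι, ‖v a‖ ^ 2) ≤ S' ^ 2 := by
      have : ∀ a : ι, ‖v a‖ ^ 2 ≤ |v a| * S' := by
        intro a
        rw [Real.norm_eq_abs, sq]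
        exact mul_le_mul_of_nonneg_left
          (hSv ▸ Finset.single_le_sum (f := fun b : ι => |v b|)
            (fun b _ => abs_nonneg _) (Finset.mem_univ a)) (abs_nonneg _)
      calc (∑ a : ι, ‖v a‖ ^ 2) ≤ ∑ a : ι, |v a| * S' := Finset.sum_le_sum fun a _ => this a
        _ = S' ^ 2 := by rw [← Finset.sum_mul, hSv, sq]
    calc Real.sqrt (∑ a : ι, ‖v a‖ ^ 2) ≤ Real.sqrt (S' ^ 2) := Real.sqrt_le_sqrt h1
      _ = S' := Real.sqrt_sq hS'nonneg
  -- Cauchy–Schwarz : S ≤ √t * n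
  have hS_le : S ≤ Real.sqrt t * n := by
    have h1 : (∑ a : ι, (1 : ℝ) * |u a|) ≤
        Real.sqrt (∑ a : ι, (1 : ℝ) ^ 2) * Real.sqrt (∑ a : ι, |u a| ^ 2) :=
      Real.sum_mul_le_sqrt_mul_sqrt _ _ _
    have h2 : (∑ a : ι, (1 : ℝ) ^ 2) = (t : ℝ) := by
      simp only [one_pow, Finset.sum_const, Finset.card_univ, nsmul_eq_mul, mul_one]
      rw [Fintype.card_coe, ht]
    have h3 : Real.sqrt (∑ a : ι, |u a| ^ 2) = n := by
      rw [hndef, EuclideanSpace.norm_eq]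
      simp [Real.norm_eq_abs]
    calc S = ∑ a : ι, (1 : ℝ) * |u a| := by rw [← hSu]; simp
      _ ≤ Real.sqrt t * n := by rw [h2, h3] at h1; exact h1
  have hd1 : deriv φ x = v := hu.deriv
  have hS_deriv : HasDerivAt (fun y : ℝ => ∑ a : ι, y ^ (a.1 : ℕ)) S' x :=
    hS'def ▸ HasDerivAt.fun_sum fun a _ => hasDerivAt_pow _ _
  have hlog : HasDerivAt (fun y : ℝ => Real.log (∑ a : ι, y ^ (a.1 : ℕ))) (S' / S) x :=
    hS_deriv.log (ne_of_gt hSpos)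
  have hev : (fun y => Real.log (∑ a : ι, |φ y a|)) =ᶠ[nhds x]
      (fun y : ℝ => Real.log (∑ a : ι, y ^ (a.1 : ℕ))) := by
    filter_upwards [Ioo_mem_nhds hx0 hx1] with y hy
    congr 1
    exact Finset.sum_congr rfl fun a _ => abs_of_nonneg (pow_nonneg hy.1.le _)
  have hlogderiv : deriv (fun y => Real.log (∑ a : ι, |φ y a|)) x = S' / S := by
    rw [hev.deriv_eq, hlog.deriv]
  clear_value S S' d w v u n
  try clear hu
  try clear hψ
  try clear hn2
  try clear hnorm
  try clear hinv
  try clear hev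
  try clear hlog
  try clear hS_deriv
  try clear horth
  try clear hvw
  try clear hu1
  try clear hune
  try clear habs_u
  try clear habs_v
  try clear hvdef
  try clear hwdef
  try clear hudef
  try clear hddef
  try clear hSdef
  try clear hS'def
  try clear hndef
  try clear hnun
  try clear hφ
  try clear hφdef
  constructor
  · -- main inequality
    rw [hderiv, hd1, hSv, hSu]
    have step1 : ‖w‖ ≤ ‖v‖ / n := (le_div_iff₀ npos).2 (by nlinarith [hkey])
    have step2 : ‖v‖ / n ≤ S' / n := by gcongr
    have step3 : S' / n ≤ Real.sqrt t * S' / S := by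
      rw [div_le_div_iff₀ npos hSpos]
      nlinarith [mul_nonneg hS'nonneg (sub_nonneg.2 hS_le)]
    linarith
  · -- the equality with the log-derivative
    rw [hd1, hSv, hSu, hlogderiv, mul_div_assoc]
end

section
/- For every n ≥ 1, every finite support A ⊆ ℤ^n of cardinality t, and every σ : A → ℝ_{>0}, the probability that the associated random fewnomial system has at least one nondegenerate zero in the positive orthant ℝ_{>0}^n is at most (1/2^{n-1})·binom(t,n). -/
open MeasureTheory ProbabilityTheory Matrix
open scoped ENNReal NNReal BigOperators

namespace FewnomialAux

/-- Sign condition: `y` has the sign prescribed by the boolean `b`. -/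
def sgn (b : Bool) (y : ℝ) : Prop := if b then 0 < y else y < 0

lemma sgn_true_iff (y : ℝ) : sgn true y ↔ 0 < y := by simp [sgn]

lemma sgn_false_iff (y : ℝ) : sgn false y ↔ y < 0 := by simp [sgn]

lemma sgn_flip_mul (b : Bool) (y : ℝ) (h : sgn b y) :
    0 < (if b = true then (1 : ℝ) else -1) * y := by
  cases b
  · rw [sgn_false_iff] at h
    simp only [Bool.false_eq_true, if_false]
    nlinarith
  · rw [sgn_true_iff] at h
    simp only [if_true]
    nlinarith

lemma sgn_mul_of_pos (b : Bool) (y : ℝ) (h : 0 < y) :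
    sgn b ((if b = true then (1 : ℝ) else -1) * y) := by
  cases b
  · rw [sgn_false_iff]
    simp only [Bool.false_eq_true, if_false]
    nlinarith
  · rw [sgn_true_iff]
    simp only [if_true]
    nlinarith

/-- Recursive bound for the number of open orthants met by a `d`-dimensional
subspace of `ℝ^t`. -/
def B : ℕ → ℕ → ℕ
  | 0, _ => 1
  | _ + 1, 0 => 0
  | t + 1, d + 1 => B t (d + 1) + B t d

lemma B_succ_zero (t : ℕ) : B (t + 1) 0 = 0 := rfl

lemma B_zero_d (d : ℕ) : B 0 d = 1 := rfl

lemma B_succ_succ (t d : ℕ) : B (t + 1) (d + 1) = B t (d + 1) + B t d := rfl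

lemma B_mono (t : ℕ) : Monotone (B t) := by
  induction t with
  | zero => intro a b _; simp [B_zero_d]
  | succ t ih =>
    apply monotone_nat_of_le_succ
    intro d
    cases d with
    | zero => simp [B_succ_zero]
    | succ d =>
      rw [B_succ_succ, B_succ_succ]
      exact Nat.add_le_add (ih (Nat.le_succ _)) (ih (Nat.le_succ _))

lemma B_le_two_pow (t d : ℕ) : B t d ≤ 2 ^ t := by
  induction t generalizing d with
  | zero => simp [B_zero_d]
  | succ t ih =>
    cases d with
    | zero => simp [B_succ_zero]
    | succ d =>
      rw [B_succ_succ, pow_succ, mul_two]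
      exact Nat.add_le_add (ih _) (ih _)

lemma B_le (t d : ℕ) (h : d ≤ t) : B t d ≤ 2 ^ (d + 1) * t.choose d := by
  induction t generalizing d with
  | zero =>
    obtain rfl := Nat.le_zero.mp h
    simp [B_zero_d]
  | succ t ih =>
    cases d with
    | zero => simp [B_succ_zero]
    | succ d =>
      rw [B_succ_succ]
      rcases Nat.lt_or_ge d t with hdt | hdt
      · have h1 := ih (d + 1) hdt
        have h2 := ih d (Nat.le_of_lt hdt)
        calc B t (d + 1) + B t d ≤ 2 ^ (d + 2) * t.choose (d + 1) + 2 ^ (d + 1) * t.choose d :=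
              Nat.add_le_add h1 h2
          _ ≤ 2 ^ (d + 2) * t.choose (d + 1) + 2 ^ (d + 2) * t.choose d := by
              gcongr <;> norm_num
          _ = 2 ^ (d + 2) * (t + 1).choose (d + 1) := by
              rw [Nat.choose_succ_succ t d, Nat.mul_add]
              exact Nat.add_comm _ _
      · have hd : d = t := le_antisymm (by omega) hdt
        subst hd
        have h1 := B_le_two_pow d (d + 1)
        have h2 := B_le_two_pow d d
        calc B d (d + 1) + B d d ≤ 2 ^ (d + 1) := by
              rw [pow_succ, mul_two]; exact Nat.add_le_add h1 h2
          _ ≤ 2 ^ (d + 2) * (d + 1).choose (d + 1) := by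
              rw [Nat.choose_self, mul_one]
              exact Nat.pow_le_pow_right (by norm_num) (Nat.le_succ _)

section Counting

open scoped Classical

variable {ι : Type*} [Fintype ι]

/-- The set of sign patterns (strict on `s`, `false` off `s`) realized by some vector of the
subspace `V`. -/
noncomputable def patterns (V : Submodule ℝ (ι → ℝ)) (s : Finset ι) : Finset (ι → Bool) :=
  Finset.univ.filter fun τ =>
    (∃ v ∈ V, ∀ i ∈ s, sgn (τ i) (v i)) ∧ ∀ i ∉ s, τ i = false

lemma card_patterns_le (s : Finset ι) (V : Submodule ℝ (ι → ℝ)) :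
    (patterns V s).card ≤ B s.card (Module.finrank ℝ V) := by
  induction s using Finset.induction_on generalizing V with
  | empty =>
    rw [Finset.card_empty, B_zero_d]
    refine Finset.card_le_one.mpr ?_
    intro τ hτ τ' hτ'
    simp only [patterns, Finset.mem_filter, Finset.mem_univ, true_and] at hτ hτ'
    funext i
    rw [hτ.2 i (Finset.notMem_empty i), hτ'.2 i (Finset.notMem_empty i)]
  | @insert a s ha ih =>
    rw [Finset.card_insert_of_notMem ha]
    by_cases hV : ∀ v ∈ V, v a = (0 : ℝ)
    · have hemp : patterns V (insert a s) = ∅ := by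
        rw [Finset.eq_empty_iff_forall_notMem]
        intro τ hτ
        simp only [patterns, Finset.mem_filter, Finset.mem_univ, true_and] at hτ
        obtain ⟨⟨v, hv, hsgn⟩, -⟩ := hτ
        have hs := hsgn a (Finset.mem_insert_self a s)
        rw [hV v hv] at hs
        unfold sgn at hs
        cases τ a <;> simp at hs
      rw [hemp]
      simp
    · push_neg at hV
      obtain ⟨v₀, hv₀, hv₀a⟩ := hV
      set V' := V ⊓ LinearMap.ker (LinearMap.proj (R := ℝ) (φ := fun _ : ι => ℝ) a) with hV'def
      have hV'lt : V' < V := by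
        rcases lt_or_eq_of_le (inf_le_left : V' ≤ V) with h | h
        · exact h
        · exfalso
          have hmem : v₀ ∈ V' := by rw [hV'def, h]; exact hv₀
          have h2 : v₀ a = 0 := by
            have hk := (Submodule.mem_inf.mp hmem).2
            rwa [LinearMap.mem_ker, LinearMap.proj_apply] at hk
          exact hv₀a h2
      have hrank : Module.finrank ℝ V' < Module.finrank ℝ V :=
        Submodule.finrank_lt_finrank_of_lt hV'lt
      obtain ⟨d, hd⟩ : ∃ d, Module.finrank ℝ V = d + 1 :=
        ⟨Module.finrank ℝ V - 1, by omega⟩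
      set f : (ι → Bool) → (ι → Bool) := fun τ => Function.update τ a false with hf
      set P := (patterns V (insert a s)).filter (fun τ => τ a = true) with hP
      set N := (patterns V (insert a s)).filter (fun τ => ¬ τ a = true) with hN
      have hPN : (patterns V (insert a s)).card = P.card + N.card :=
        (Finset.card_filter_add_card_filter_not _).symm
      have hrec : ∀ b : Bool, ∀ τ : ι → Bool, τ a = b → Function.update (f τ) a b = τ := by
        intro b τ hb
        funext i
        by_cases hi : i = a
        · subst hi; rw [Function.update_self, hb]
        · rw [Function.update_of_ne hi, hf]
          simp only [Function.update_of_ne hi]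
      have hinjP : Set.InjOn f ↑P := by
        intro τ₁ h1 τ₂ h2 he
        have hb1 : τ₁ a = true := (Finset.mem_filter.mp h1).2
        have hb2 : τ₂ a = true := (Finset.mem_filter.mp h2).2
        rw [← hrec true τ₁ hb1, ← hrec true τ₂ hb2, he]
      have hinjN : Set.InjOn f ↑N := by
        intro τ₁ h1 τ₂ h2 he
        have hb1 : τ₁ a = false := Bool.not_eq_true _ ▸ (Finset.mem_filter.mp h1).2
        have hb2 : τ₂ a = false := Bool.not_eq_true _ ▸ (Finset.mem_filter.mp h2).2
        rw [← hrec false τ₁ hb1, ← hrec false τ₂ hb2, he]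
      have hsub : ∀ b : Bool, ∀ τ : ι → Bool, τ ∈ patterns V (insert a s) →
          f τ ∈ patterns V s := by
        intro b τ hτ
        simp only [patterns, Finset.mem_filter, Finset.mem_univ, true_and] at hτ ⊢
        obtain ⟨⟨v, hv, hsgn⟩, hoff⟩ := hτ
        refine ⟨⟨v, hv, fun i hi => ?_⟩, fun i hi => ?_⟩
        · have hia : i ≠ a := fun h => ha (h ▸ hi)
          rw [hf]
          simp only [Function.update_of_ne hia]
          exact hsgn i (Finset.mem_insert_of_mem hi)
        · by_cases hia : i = a
          · subst hia; rw [hf]; simp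
          · rw [hf]; simp only [Function.update_of_ne hia]
            exact hoff i (fun hmem => hi ((Finset.mem_insert.mp hmem).resolve_left hia))
      have hint : (P.image f) ∩ (N.image f) ⊆ patterns V' s := by
        intro τ' hτ'
        obtain ⟨h1, h2⟩ := Finset.mem_inter.mp hτ'
        obtain ⟨τ₁, hτ₁, he₁⟩ := Finset.mem_image.mp h1
        obtain ⟨τ₂, hτ₂, he₂⟩ := Finset.mem_image.mp h2
        obtain ⟨hτ₁p, hb1⟩ := Finset.mem_filter.mp hτ₁
        obtain ⟨hτ₂p, hb2'⟩ := Finset.mem_filter.mp hτ₂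
        have hb2 : τ₂ a = false := Bool.not_eq_true _ ▸ hb2'
        simp only [patterns, Finset.mem_filter, Finset.mem_univ, true_and] at hτ₁p hτ₂p
        obtain ⟨⟨v, hv, hsgn1⟩, hoff1⟩ := hτ₁p
        obtain ⟨⟨w, hw, hsgn2⟩, hoff2⟩ := hτ₂p
        have hva : 0 < v a := by
          have := hsgn1 a (Finset.mem_insert_self a s)
          rw [hb1] at this
          simpa [sgn] using this
        have hwa : w a < 0 := by
          have := hsgn2 a (Finset.mem_insert_self a s)
          rw [hb2] at this
          simpa [sgn] using this
        set u : ι → ℝ := v a • w - w a • v with hu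
        have humem : u ∈ V := Submodule.sub_mem _ (V.smul_mem _ hw) (V.smul_mem _ hv)
        have hua : u a = 0 := by simp [hu]; ring
        simp only [patterns, Finset.mem_filter, Finset.mem_univ, true_and]
        constructor
        · refine ⟨u, Submodule.mem_inf.mpr ⟨humem, ?_⟩, ?_⟩
          · rw [LinearMap.mem_ker, LinearMap.proj_apply]; exact hua
          · intro i hi
            have hia : i ≠ a := fun h => ha (h ▸ hi)
            have ht1 : τ₁ i = τ' i := by
              rw [← he₁, hf]; simp only [Function.update_of_ne hia]
            have ht2 : τ₂ i = τ' i := by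
              rw [← he₂, hf]; simp only [Function.update_of_ne hia]
            have s1 := hsgn1 i (Finset.mem_insert_of_mem hi)
            have s2 := hsgn2 i (Finset.mem_insert_of_mem hi)
            rw [ht1] at s1
            rw [ht2] at s2
            have hui : u i = v a * w i - w a * v i := by simp [hu]
            cases hcase : τ' i with
            | false =>
              rw [hcase] at s1 s2
              simp only [sgn, if_false, Bool.false_eq_true] at s1 s2 ⊢
              rw [hui]; nlinarith
            | true =>
              rw [hcase] at s1 s2
              simp only [sgn, if_true] at s1 s2 ⊢
              rw [hui]; nlinarith
        · intro i hi
          by_cases hia : i = a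
          · subst hia; rw [← he₁, hf]; simp
          · rw [← he₁, hf]; simp only [Function.update_of_ne hia]
            exact hoff1 i (fun hmem => hi ((Finset.mem_insert.mp hmem).resolve_left hia))
      calc (patterns V (insert a s)).card = P.card + N.card := hPN
        _ = (P.image f).card + (N.image f).card := by
            rw [Finset.card_image_of_injOn hinjP, Finset.card_image_of_injOn hinjN]
        _ = ((P.image f) ∪ (N.image f)).card + ((P.image f) ∩ (N.image f)).card :=
            (Finset.card_union_add_card_inter _ _).symm
        _ ≤ (patterns V s).card + (patterns V' s).card := by
            refine Nat.add_le_add (Finset.card_le_card ?_) (Finset.card_le_card hint)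
            refine Finset.union_subset ?_ ?_
            · intro τ' hτ'
              obtain ⟨τ, hτ, he⟩ := Finset.mem_image.mp hτ'
              exact he ▸ hsub true τ (Finset.mem_filter.mp hτ).1
            · intro τ' hτ'
              obtain ⟨τ, hτ, he⟩ := Finset.mem_image.mp hτ'
              exact he ▸ hsub false τ (Finset.mem_filter.mp hτ).1
        _ ≤ B s.card (Module.finrank ℝ V) + B s.card (Module.finrank ℝ V') :=
            Nat.add_le_add (ih V) (ih V')
        _ ≤ B s.card (d + 1) + B s.card d := by
            refine Nat.add_le_add (by rw [hd]) (B_mono _ (by omega))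
        _ = B (s.card + 1) (d + 1) := (B_succ_succ _ _).symm
        _ = B (s.card + 1) (Module.finrank ℝ V) := by rw [hd]

lemma card_realized_le (V : Submodule ℝ (ι → ℝ)) :
    (Finset.univ.filter fun τ : ι → Bool => ∃ v ∈ V, ∀ i, sgn (τ i) (v i)).card
      ≤ B (Fintype.card ι) (Module.finrank ℝ V) := by
  have h : (Finset.univ.filter fun τ : ι → Bool => ∃ v ∈ V, ∀ i, sgn (τ i) (v i))
      = patterns V Finset.univ := by
    apply Finset.filter_congr
    intro τ _
    constructor
    · rintro ⟨v, hv, hs⟩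
      exact ⟨⟨v, hv, fun i _ => hs i⟩, fun i hi => absurd (Finset.mem_univ i) hi⟩
    · rintro ⟨⟨v, hv, hs⟩, -⟩
      exact ⟨v, hv, fun i => hs i (Finset.mem_univ i)⟩
  rw [h]
  simpa using card_patterns_le Finset.univ V

end Counting

section LinAlg

variable {n : ℕ} {ι : Type*} [Fintype ι] [DecidableEq ι]

/-- If the rows of a matrix are linearly independent, some square submatrix obtained by
selecting columns is invertible. -/
lemma exists_minor (M : Fin n → ι → ℝ) (h : LinearIndependent ℝ M) :
    ∃ g : Fin n → ι, (Matrix.of fun i j => M i (g j)).det ≠ 0 := by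
  classical
  have hspan : Submodule.span ℝ (Set.range fun a : ι => (fun i => M i a)) = ⊤ := by
    have hcols : (fun a : ι => (fun i => M i a)) = ((Matrix.of M)ᵀ : Matrix ι (Fin n) ℝ) := by
      funext a i
      rfl
    have h1 : LinearMap.range (Matrix.mulVecLin ((Matrix.of M)ᵀ))
        = Submodule.span ℝ (Set.range M) := by
      rw [Matrix.range_mulVecLin]
      rfl
    have h2 : ((Matrix.of M)ᵀ).rank = n := by
      rw [Matrix.rank, h1, finrank_span_eq_card h, Fintype.card_fin]
    have h3 : (Matrix.of M).rank = n := by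
      rw [← Matrix.rank_transpose]
      exact h2
    have h4 : LinearMap.range (Matrix.mulVecLin (Matrix.of M)) = ⊤ := by
      apply Submodule.eq_top_of_finrank_eq
      rw [Module.finrank_fintype_fun_eq_card, Fintype.card_fin]
      exact h3
    rw [show (fun a : ι => (fun i => M i a)) = (Matrix.of M).col from rfl, ← Matrix.range_mulVecLin, h4]
  obtain ⟨b, hbsub, hbspan, hbind⟩ :=
    exists_linearIndependent ℝ (Set.range fun a : ι => (fun i => M i a))
  rw [hspan] at hbspan
  have hbfin : b.Finite := Set.Finite.subset (Set.finite_range _) hbsub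
  haveI : Fintype b := hbfin.fintype
  let bas : Module.Basis b ℝ (Fin n → ℝ) := Module.Basis.mk hbind (by rw [Subtype.range_val, hbspan])
  have hcard : Fintype.card b = n := by
    have hfb := Module.finrank_eq_card_basis bas
    rw [Module.finrank_fintype_fun_eq_card, Fintype.card_fin] at hfb
    exact hfb.symm
  let e : Fin n ≃ b := (Fintype.equivFinOfCardEq hcard).symm
  choose gfun hgfun using fun j : Fin n => hbsub (e j).2
  refine ⟨gfun, ?_⟩
  let bas' : Module.Basis (Fin n) ℝ (Fin n → ℝ) := bas.reindex e.symm
  have hmx : (Matrix.of fun i j => M i (gfun j)) = (Pi.basisFun ℝ (Fin n)).toMatrix ⇑bas' := by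
    ext i j
    rw [Module.Basis.toMatrix_apply, Pi.basisFun_repr]
    have h1 : bas' j = bas (e j) := by
      simp [bas', Module.Basis.reindex_apply]
    have h2 : (bas (e j) : Fin n → ℝ) = ((e j : Set.Elem b) : Fin n → ℝ) := by
      simp [bas, Module.Basis.mk_apply]
    have h3 : ((e j : Set.Elem b) : Fin n → ℝ) = fun i => M i (gfun j) := (hgfun j).symm
    rw [Matrix.of_apply, h1, h2, h3]
  rw [hmx]
  haveI := (Pi.basisFun ℝ (Fin n)).invertibleToMatrix bas'
  exact (Matrix.isUnit_det_of_invertible _).ne_zero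

/-- Splitting a sum over `ι` along the image of an injective map `g`. -/
lemma sum_split (g : Fin n → ι) (hg : Function.Injective g) (F : ι → ℝ) :
    ∑ a, F a = (∑ j, F (g j)) + ∑ a ∈ (Finset.univ.image g)ᶜ, F a := by
  rw [← Finset.sum_image (f := F) (g := g) (fun x _ y _ h => hg h),
    Finset.sum_add_sum_compl]

/-- The kernel of a row-independent `n × t` matrix has dimension `t - n`. -/
lemma finrank_ker (M : Fin n → ι → ℝ) (g : Fin n → ι)
    (hg : (Matrix.of fun i j => M i (g j)).det ≠ 0) :
    Module.finrank ℝ (LinearMap.ker (Matrix.mulVecLin (Matrix.of M)))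
      = Fintype.card ι - n := by
  classical
  have hginj : Function.Injective g := by
    intro j1 j2 hj
    by_contra hne
    exact hg (Matrix.det_zero_of_column_eq hne (fun k => by simp [hj]))
  have hsurj : Function.Surjective (Matrix.mulVecLin (Matrix.of M)) := by
    intro y
    set Mg : Matrix (Fin n) (Fin n) ℝ := Matrix.of fun i j => M i (g j) with hMg
    set w : Fin n → ℝ := Mg⁻¹ *ᵥ y with hw
    set v : ι → ℝ := fun a => if h : ∃ j, g j = a then w h.choose else 0 with hv
    have hvg : ∀ j, v (g j) = w j := by
      intro j
      have hex : ∃ j', g j' = g j := ⟨j, rfl⟩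
      rw [hv]
      simp only [dif_pos hex]
      congr 1
      exact hginj hex.choose_spec
    refine ⟨v, ?_⟩
    funext i
    rw [Matrix.mulVecLin_apply]
    have expand : (Matrix.of M).mulVec v i = ∑ a, M i a * v a := by
      simp [Matrix.mulVec, dotProduct]
    rw [expand, sum_split g hginj (fun a => M i a * v a)]
    have hcompl : ∑ a ∈ (Finset.univ.image g)ᶜ, M i a * v a = 0 := by
      refine Finset.sum_eq_zero fun a haa => ?_
      have hnex : ¬ ∃ j, g j = a := by
        rintro ⟨j, rfl⟩
        exact (Finset.mem_compl.mp haa) (Finset.mem_image.mpr ⟨j, Finset.mem_univ j, rfl⟩)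
      rw [hv]
      simp only [dif_neg hnex, mul_zero]
    have himg : ∑ j, M i (g j) * v (g j) = (Mg *ᵥ w) i := by
      simp only [hvg]
      simp [Matrix.mulVec, dotProduct, hMg]
    rw [hcompl, himg, add_zero, hw, Matrix.mulVec_mulVec,
      Matrix.mul_nonsing_inv _ (isUnit_iff_ne_zero.mpr hg), Matrix.one_mulVec]
  have hrn := LinearMap.finrank_range_add_finrank_ker (Matrix.mulVecLin (Matrix.of M))
  rw [LinearMap.range_eq_top.mpr hsurj, finrank_top] at hrn
  rw [Module.finrank_fintype_fun_eq_card, Fintype.card_fin] at hrn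
  rw [Module.finrank_fintype_fun_eq_card] at hrn
  omega

end LinAlg

section Core

variable {n : ℕ} {ι : Type*} [Fintype ι] [DecidableEq ι]

/-- The event that some vector with sign pattern `τ` lies in the kernel, intersected with the
full-row-rank event. -/
def ET (n : ℕ) (ι : Type*) [Fintype ι] (τ : ι → Bool) : Set (Fin n → ι → ℝ) :=
  {M | (∃ v : ι → ℝ, (∀ a, sgn (τ a) (v a)) ∧ ∀ i, ∑ a, M i a * v a = 0) ∧
    ∃ g : Fin n → ι, (Matrix.of fun i j => M i (g j)).det ≠ 0}

lemma isOpen_ET (τ : ι → Bool) : IsOpen (ET n ι τ) := by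
  classical
  have hET : ET n ι τ = ⋃ g : Fin n → ι,
      {M : Fin n → ι → ℝ | (Matrix.of fun i j => M i (g j)).det ≠ 0 ∧
        ∃ v : ι → ℝ, (∀ a, sgn (τ a) (v a)) ∧ ∀ i, ∑ a, M i a * v a = 0} := by
    ext M
    simp only [ET, Set.mem_setOf_eq, Set.mem_iUnion]
    tauto
  rw [hET]
  refine isOpen_iUnion fun g => ?_
  by_cases hginj : Function.Injective g
  swap
  · convert isOpen_empty
    rw [Set.eq_empty_iff_forall_notMem]
    rintro M ⟨hdet, -⟩
    rw [Function.not_injective_iff] at hginj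
    obtain ⟨j1, j2, hj, hne⟩ := hginj
    exact hdet (Matrix.det_zero_of_column_eq hne fun k => by simp [hj])
  have hcontmin : Continuous fun M : Fin n → ι → ℝ => Matrix.of fun i j => M i (g j) :=
    continuous_matrix fun i j => (continuous_apply (g j)).comp (continuous_apply i)
  have hcontdet : Continuous fun M : Fin n → ι → ℝ => (Matrix.of fun i j => M i (g j)).det :=
    hcontmin.matrix_det
  set D := {M : Fin n → ι → ℝ | (Matrix.of fun i j => M i (g j)).det ≠ 0} with hD
  have hDopen : IsOpen D := isOpen_ne.preimage hcontdet
  rw [isOpen_iff_forall_mem_open]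
  rintro M₀ ⟨hdet₀, v₀, hsgn₀, horth₀⟩
  set r : (Fin n → ι → ℝ) → Fin n → ℝ :=
    fun M i => -∑ a ∈ (Finset.univ.image g)ᶜ, M i a * v₀ a with hr
  have hrcont : ∀ i, Continuous fun M => r M i := fun i =>
    (Continuous.neg (continuous_finset_sum _ fun a _ =>
      (continuous_apply_apply i a).mul continuous_const))
  set w : (Fin n → ι → ℝ) → Fin n → ℝ :=
    fun M => (Matrix.of fun i j => M i (g j))⁻¹ *ᵥ r M with hw
  have hwcont : ∀ j, ContinuousOn (fun M => w M j) D := by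
    intro j
    have hform : (fun M => w M j) = fun M =>
        ((Matrix.of fun i j => M i (g j)).det)⁻¹ *
          ∑ k, ((Matrix.of fun i j => M i (g j)).adjugate) j k * r M k := by
      funext M
      rw [hw]
      show ((Matrix.of fun i j => M i (g j))⁻¹ *ᵥ r M) j = _
      rw [Matrix.inv_def]
      simp [Matrix.mulVec, dotProduct, Matrix.smul_apply, smul_eq_mul,
        Finset.mul_sum, Ring.inverse_eq_inv', mul_assoc]
    rw [hform]
    refine ContinuousOn.mul (ContinuousOn.inv₀ hcontdet.continuousOn fun M hM => hM) ?_
    refine (continuous_finset_sum _ fun k _ => Continuous.mul ?_ (hrcont k)).continuousOn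
    exact (continuous_apply k).comp ((continuous_apply j).comp hcontmin.matrix_adjugate)
  set vm : (Fin n → ι → ℝ) → ι → ℝ :=
    fun M a => if h : ∃ j, g j = a then w M h.choose else v₀ a with hvm
  have hvmg : ∀ M j, vm M (g j) = w M j := by
    intro M j
    have hex : ∃ j', g j' = g j := ⟨j, rfl⟩
    rw [hvm]
    simp only [dif_pos hex]
    congr 1
    exact hginj hex.choose_spec
  have hvmout : ∀ M, ∀ a ∈ (Finset.univ.image g)ᶜ, vm M a = v₀ a := by
    intro M a haa
    have hnex : ¬ ∃ j, g j = a := by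
      rintro ⟨j, rfl⟩
      exact (Finset.mem_compl.mp haa) (Finset.mem_image.mpr ⟨j, Finset.mem_univ j, rfl⟩)
    rw [hvm]
    simp only [dif_neg hnex]
  have hvmcont : ∀ a, ContinuousOn (fun M => vm M a) D := by
    intro a
    by_cases hex : ∃ j, g j = a
    · simp only [hvm, dif_pos hex]
      exact hwcont hex.choose
    · simp only [hvm, dif_neg hex]
      exact continuousOn_const
  have horth : ∀ M ∈ D, ∀ i, ∑ a, M i a * vm M a = 0 := by
    intro M hM i
    rw [sum_split g hginj (fun a => M i a * vm M a)]
    have h1 : ∑ j, M i (g j) * vm M (g j) = ((Matrix.of fun i j => M i (g j)) *ᵥ w M) i := by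
      simp only [hvmg]
      simp [Matrix.mulVec, dotProduct]
    have h2 : ((Matrix.of fun i j => M i (g j)) *ᵥ w M) = r M := by
      rw [hw, Matrix.mulVec_mulVec,
        Matrix.mul_nonsing_inv _ (isUnit_iff_ne_zero.mpr hM), Matrix.one_mulVec]
    have h3 : ∑ a ∈ (Finset.univ.image g)ᶜ, M i a * vm M a = -(r M i) := by
      rw [Finset.sum_congr rfl fun a haa => by rw [hvmout M a haa]]
      rw [hr]
      simp
    rw [h1, h2, h3]
    ring
  have hvm₀ : ∀ a, vm M₀ a = v₀ a := by
    have hwM₀ : w M₀ = fun j => v₀ (g j) := by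
      have hr₀ : r M₀ = (Matrix.of fun i j => M₀ i (g j)) *ᵥ (fun j => v₀ (g j)) := by
        funext i
        have hsp := horth₀ i
        rw [sum_split g hginj (fun a => M₀ i a * v₀ a)] at hsp
        have himg : ∑ j, M₀ i (g j) * v₀ (g j)
            = ((Matrix.of fun i j => M₀ i (g j)) *ᵥ fun j => v₀ (g j)) i := by
          simp [Matrix.mulVec, dotProduct]
        rw [himg] at hsp
        rw [hr]
        simp only
        linarith
      show (Matrix.of fun i j => M₀ i (g j))⁻¹ *ᵥ r M₀ = fun j => v₀ (g j)
      rw [hr₀, Matrix.mulVec_mulVec,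
        Matrix.nonsing_inv_mul _ (isUnit_iff_ne_zero.mpr hdet₀), Matrix.one_mulVec]
    intro a
    by_cases hex : ∃ j, g j = a
    · obtain ⟨j, rfl⟩ := hex
      rw [hvmg, hwM₀]
    · rw [hvm]; simp only [dif_neg hex]
  set tgt : ι → Set ℝ := fun a => if τ a then Set.Ioi 0 else Set.Iio 0 with htgt
  have htgtopen : ∀ a, IsOpen (tgt a) := by
    intro a
    rw [htgt]
    by_cases h : τ a
    · simp only [if_pos h]; exact isOpen_Ioi
    · simp only [if_neg h]; exact isOpen_Iio
  have htgtmem : ∀ a y, sgn (τ a) y ↔ y ∈ tgt a := by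
    intro a y
    rw [htgt]
    unfold sgn
    by_cases h : τ a = true <;> simp [h]
  refine ⟨D ∩ ⋂ a, (D ∩ (fun M => vm M a) ⁻¹' tgt a), ?_, ?_, ?_⟩
  · rintro M ⟨hMD, hMI⟩
    refine ⟨hMD, vm M, fun a => ?_, horth M hMD⟩
    exact (htgtmem a _).mpr (Set.mem_iInter.mp hMI a).2
  · exact hDopen.inter (isOpen_iInter_of_finite fun a =>
      (hvmcont a).isOpen_inter_preimage hDopen (htgtopen a))
  · refine ⟨hdet₀, Set.mem_iInter.mpr fun a => ⟨hdet₀, ?_⟩⟩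
    show vm M₀ a ∈ tgt a
    rw [hvm₀ a]
    exact (htgtmem a _).mp (hsgn₀ a)

lemma measure_ET_eq (τ : ι → Bool) :
    (Measure.pi fun _ : Fin n => Measure.pi fun _ : ι => gaussianReal 0 1) (ET n ι τ)
      = (Measure.pi fun _ : Fin n => Measure.pi fun _ : ι => gaussianReal 0 1)
          (ET n ι (fun _ => true)) := by
  classical
  set ε : ι → ℝ := fun a => if τ a then 1 else -1 with hε
  have hε2 : ∀ a, ε a * ε a = 1 := by
    intro a; rw [hε]; by_cases h : τ a <;> simp [h]
  have hεne : ∀ a, ε a ≠ 0 := by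
    intro a; rw [hε]; by_cases h : τ a <;> simp [h]
  have hmp1 : ∀ _a : ι, MeasurePreserving (fun x : ℝ => ε _a * x)
      (gaussianReal 0 1) (gaussianReal 0 1) := by
    intro a
    refine ⟨measurable_const_mul _, ?_⟩
    have h2 : (⟨(ε a) ^ 2, sq_nonneg _⟩ : ℝ≥0) = 1 := by
      have hq : (ε a) ^ 2 = 1 := by rw [sq, hε2 a]
      exact NNReal.eq hq
    have hmap : Measure.map (fun x : ℝ => ε a * x) (gaussianReal 0 1)
        = gaussianReal (ε a * 0) (⟨(ε a) ^ 2, sq_nonneg _⟩ * 1) :=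
      gaussianReal_map_const_mul (ε a)
    rw [hmap, mul_zero]; congr 1; exact (mul_one _).trans h2
  have hmp : MeasurePreserving (fun (M : Fin n → ι → ℝ) i a => ε a * M i a)
      (Measure.pi fun _ : Fin n => Measure.pi fun _ : ι => gaussianReal 0 1)
      (Measure.pi fun _ : Fin n => Measure.pi fun _ : ι => gaussianReal 0 1) :=
    measurePreserving_pi _ _ (fun _i => measurePreserving_pi _ _ hmp1)
  have hpre : (fun (M : Fin n → ι → ℝ) i a => ε a * M i a) ⁻¹' (ET n ι fun _ => true)
      = ET n ι τ := by
    ext M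
    simp only [Set.mem_preimage, ET, Set.mem_setOf_eq]
    constructor
    · rintro ⟨⟨v, hv, hov⟩, g, hg⟩
      refine ⟨⟨fun a => ε a * v a, fun a => ?_, fun i => ?_⟩, g, ?_⟩
      · have hva : 0 < v a := (sgn_true_iff (v a)).mp (hv a)
        exact sgn_mul_of_pos (τ a) (v a) hva
      · have hzero := hov i
        rw [← hzero]
        refine Finset.sum_congr rfl fun a _ => by ring
      · intro h0
        apply hg
        have hdc : (Matrix.of fun i j => ε (g j) * M i (g j)).det
            = (∏ j, ε (g j)) * (Matrix.of fun i j => M i (g j)).det :=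
          Matrix.det_mul_row _ _
        rw [hdc, h0, mul_zero]
    · rintro ⟨⟨v, hv, hov⟩, g, hg⟩
      refine ⟨⟨fun a => ε a * v a, fun a => ?_, fun i => ?_⟩, g, ?_⟩
      · rw [sgn_true_iff]
        exact sgn_flip_mul (τ a) (v a) (hv a)
      · have hzero := hov i
        rw [← hzero]
        refine Finset.sum_congr rfl fun a _ => ?_
        have hprod : (ε a * M i a) * (ε a * v a) = (ε a * ε a) * (M i a * v a) := by ring
        rw [hprod, hε2 a, one_mul]
      · have hdc : (Matrix.of fun i j => ε (g j) * M i (g j)).det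
            = (∏ j, ε (g j)) * (Matrix.of fun i j => M i (g j)).det :=
          Matrix.det_mul_row _ _
        rw [hdc]
        exact mul_ne_zero (Finset.prod_ne_zero_iff.mpr fun j _ => hεne (g j)) hg
  rw [← hpre, hmp.measure_preimage (isOpen_ET _).measurableSet.nullMeasurableSet]

open scoped Classical in
lemma card_ET_le (M : Fin n → ι → ℝ)
    (hF : ∃ g : Fin n → ι, (Matrix.of fun i j => M i (g j)).det ≠ 0) :
    (Finset.univ.filter fun τ : ι → Bool => M ∈ ET n ι τ).card
      ≤ B (Fintype.card ι) (Fintype.card ι - n) := by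
  obtain ⟨g, hg⟩ := hF
  set K := LinearMap.ker (Matrix.mulVecLin (Matrix.of M)) with hK
  have hmem : ∀ v : ι → ℝ, v ∈ K ↔ ∀ i, ∑ a, M i a * v a = 0 := by
    intro v
    rw [hK, LinearMap.mem_ker, Matrix.mulVecLin_apply]
    constructor
    · intro h i
      have := congrFun h i
      simpa [Matrix.mulVec, dotProduct] using this
    · intro h
      funext i
      simpa [Matrix.mulVec, dotProduct] using h i
  have hfilter : (Finset.univ.filter fun τ : ι → Bool => M ∈ ET n ι τ)
      = Finset.univ.filter fun τ : ι → Bool => ∃ v ∈ K, ∀ a, sgn (τ a) (v a) := by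
    apply Finset.filter_congr
    intro τ _
    simp only [ET, Set.mem_setOf_eq]
    constructor
    · rintro ⟨⟨v, h1, h2⟩, -⟩
      exact ⟨v, (hmem v).mpr h2, h1⟩
    · rintro ⟨v, hv, h1⟩
      exact ⟨⟨v, h1, (hmem v).mp hv⟩, g, hg⟩
  rw [hfilter]
  have hcount := card_realized_le K
  rw [finrank_ker M g hg] at hcount
  convert hcount using 3
  exact congrArg (fun h : Fintype (ι → Bool) => @Finset.univ _ h) (Subsingleton.elim _ _)

theorem core_bound (n : ℕ) (hn : 1 ≤ n) (ι : Type*) [Fintype ι] [DecidableEq ι] :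
    (Measure.pi fun _ : Fin n => Measure.pi fun _ : ι => gaussianReal 0 1)
      (ET n ι (fun _ => true))
      ≤ (1 / 2 ^ (n - 1)) * ((Fintype.card ι).choose n : ℝ≥0∞) := by
  classical
  set μ := Measure.pi fun _ : Fin n => Measure.pi fun _ : ι => gaussianReal 0 1 with hμ
  set t := Fintype.card ι with hT
  rcases isEmpty_or_nonempty ι with hemp | hne
  · have hempty : ET n ι (fun _ => true) = ∅ := by
      rw [Set.eq_empty_iff_forall_notMem]
      rintro M ⟨-, g, -⟩
      exact hemp.false (g ⟨0, hn⟩)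
    rw [hempty]
    simp
  haveI : IsProbabilityMeasure μ := by rw [hμ]; infer_instance
  have hmeas : ∀ τ : ι → Bool, MeasurableSet (ET n ι τ) := fun τ => (isOpen_ET τ).measurableSet
  have hsum : ∑ τ : ι → Bool, μ (ET n ι τ) ≤ (B t (t - n) : ℝ≥0∞) := by
    calc ∑ τ : ι → Bool, μ (ET n ι τ)
        = ∑ τ : ι → Bool, ∫⁻ M, (ET n ι τ).indicator (fun _ => (1 : ℝ≥0∞)) M ∂μ := by
          refine Finset.sum_congr rfl fun τ _ => ?_
          exact (lintegral_indicator_one (hmeas τ)).symm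
      _ = ∫⁻ M, ∑ τ : ι → Bool, (ET n ι τ).indicator (fun _ => (1 : ℝ≥0∞)) M ∂μ := by
          rw [lintegral_finset_sum]
          exact fun τ _ => measurable_const.indicator (hmeas τ)
      _ ≤ ∫⁻ _, (B t (t - n) : ℝ≥0∞) ∂μ := by
          refine lintegral_mono fun M => ?_
          by_cases hF : ∃ g : Fin n → ι, (Matrix.of fun i j => M i (g j)).det ≠ 0
          · have hcard := card_ET_le M hF
            calc ∑ τ : ι → Bool, (ET n ι τ).indicator (fun _ => (1 : ℝ≥0∞)) M
                = ∑ τ : ι → Bool, if M ∈ ET n ι τ then 1 else 0 := by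
                  refine Finset.sum_congr rfl fun τ _ => ?_
                  rw [Set.indicator_apply]
              _ = ((Finset.univ.filter fun τ : ι → Bool => M ∈ ET n ι τ).card : ℝ≥0∞) := by
                  rw [Finset.sum_boole]
              _ ≤ _ := by exact_mod_cast hcard
          · have hzero : ∀ τ : ι → Bool, (ET n ι τ).indicator (fun _ => (1 : ℝ≥0∞)) M = 0 := by
              intro τ
              rw [Set.indicator_of_notMem]
              rintro ⟨-, hg⟩
              exact hF hg
            simp [hzero]
      _ = (B t (t - n) : ℝ≥0∞) := by rw [lintegral_const, measure_univ, mul_one]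
  have hconst : (2 ^ t : ℝ≥0∞) * μ (ET n ι fun _ => true) ≤ (B t (t - n) : ℝ≥0∞) := by
    have heq : ∑ τ : ι → Bool, μ (ET n ι τ)
        = (2 ^ t : ℝ≥0∞) * μ (ET n ι fun _ => true) := by
      rw [Finset.sum_congr rfl fun τ _ => measure_ET_eq τ, Finset.sum_const,
        Finset.card_univ, Fintype.card_fun, Fintype.card_bool, nsmul_eq_mul]
      push_cast
      rw [hT]
    rw [← heq]
    exact hsum
  have hBn : B t (t - n) * 2 ^ (n - 1) ≤ 2 ^ t * t.choose n := by
    rcases Nat.lt_or_ge t n with h | h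
    · have ht1 : 1 ≤ t := by rw [hT]; exact Fintype.card_pos
      have h0 : t - n = 0 := by omega
      rw [h0]
      rcases t with _ | t'
      · omega
      · rw [B_succ_zero]; simp
    · have h1 : B t (t - n) ≤ 2 ^ (t - n + 1) * t.choose (t - n) := B_le t (t - n) (by omega)
      rw [Nat.choose_symm h] at h1
      calc B t (t - n) * 2 ^ (n - 1)
          ≤ (2 ^ (t - n + 1) * t.choose n) * 2 ^ (n - 1) := Nat.mul_le_mul_right _ h1
        _ = (2 ^ (t - n + 1) * 2 ^ (n - 1)) * t.choose n := by ring
        _ = 2 ^ t * t.choose n := by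
            rw [← pow_add]
            have hexp : t - n + 1 + (n - 1) = t := by omega
            rw [hexp]
  have h2t : ((2 : ℝ≥0∞) ^ t) ≠ 0 := by
    exact pow_ne_zero _ (by norm_num)
  have h2t' : ((2 : ℝ≥0∞) ^ t) ≠ ⊤ := by
    exact ENNReal.pow_ne_top (by norm_num)
  have h2n : ((2 : ℝ≥0∞) ^ (n - 1)) ≠ 0 := pow_ne_zero _ (by norm_num)
  have h2n' : ((2 : ℝ≥0∞) ^ (n - 1)) ≠ ⊤ := ENNReal.pow_ne_top (by norm_num)
  refine (ENNReal.mul_le_mul_iff_right h2t h2t').mp ?_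
  calc (2 : ℝ≥0∞) ^ t * μ (ET n ι fun _ => true) ≤ (B t (t - n) : ℝ≥0∞) := hconst
    _ ≤ (2 : ℝ≥0∞) ^ t * (1 / 2 ^ (n - 1) * ((t.choose n : ℕ) : ℝ≥0∞)) := by
        have hrw : (2 : ℝ≥0∞) ^ t * (1 / 2 ^ (n - 1) * ((t.choose n : ℕ) : ℝ≥0∞))
            = ((2 : ℝ≥0∞) ^ t * ((t.choose n : ℕ) : ℝ≥0∞)) / 2 ^ (n - 1) := by
          rw [one_div, div_eq_mul_inv]
          ring
        rw [hrw, ENNReal.le_div_iff_mul_le (Or.inl h2n) (Or.inl h2n')]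
        have := Nat.cast_le (α := ℝ≥0∞).mpr hBn
        push_cast at this
        convert this using 2 <;> norm_num
  
end Core

end FewnomialAux

/-- **Corollary (probability of a nondegenerate positive solution).** For every `n ≥ 1`,
finite support `A ⊆ ℤⁿ` of cardinality `t` and variances `σ : A → ℝ_{>0}`, the
probability that the random fewnomial system `fᵢ(x) = ∑_{α ∈ A} σ(α) ξ_{i,α} x^α`
(i.i.d. standard Gaussian `ξ_{i,α}`) has at least one nondegenerate zero in `ℝ_{>0}ⁿ` is
at most `(1/2^{n-1})·C(t,n)`. -/
theorem probability_nondegenerate_zero_le (n : ℕ) (hn : 1 ≤ n) (A : Finset (Fin n → ℤ))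
    (t : ℕ) (ht : A.card = t) (σ : (Fin n → ℤ) → ℝ) (hσ : ∀ α ∈ A, 0 < σ α) :
    (Measure.pi fun _ : Fin n => Measure.pi fun _ : {α // α ∈ A} => gaussianReal 0 1)
      {ξ : Fin n → {α // α ∈ A} → ℝ | ∃ x : Fin n → ℝ, (∀ i, 0 < x i) ∧
        (∀ i, (∑ α : {α // α ∈ A}, σ α.1 * ξ i α * zmon α.1 x) = 0) ∧
        (Matrix.of fun i j : Fin n =>
            fderiv ℝ (fun y => ∑ α : {α // α ∈ A}, σ α.1 * ξ i α * zmon α.1 y) x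
              (Pi.single j 1)).det ≠ 0}
    ≤ (1 / 2 ^ (n - 1)) * (t.choose n : ℝ≥0∞) := by
  classical
  have hsub : {ξ : Fin n → {α // α ∈ A} → ℝ | ∃ x : Fin n → ℝ, (∀ i, 0 < x i) ∧
        (∀ i, (∑ α : {α // α ∈ A}, σ α.1 * ξ i α * zmon α.1 x) = 0) ∧
        (Matrix.of fun i j : Fin n =>
            fderiv ℝ (fun y => ∑ α : {α // α ∈ A}, σ α.1 * ξ i α * zmon α.1 y) x
              (Pi.single j 1)).det ≠ 0}
      ⊆ FewnomialAux.ET n {α // α ∈ A} (fun _ => true) := by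
    rintro ξ ⟨x, hx, hzero, hdet⟩
    have hzmon : ∀ α : {α // α ∈ A}, DifferentiableAt ℝ (zmon α.1) x := by
      intro α
      have hgi : ∀ i : Fin n, DifferentiableAt ℝ (fun y : Fin n → ℝ => y i ^ α.1 i) x := by
        intro i
        have houter : DifferentiableAt ℝ (fun w : ℝ => w ^ α.1 i) (x i) :=
          differentiableAt_zpow.mpr (Or.inl (ne_of_gt (hx i)))
        have hinner : DifferentiableAt ℝ (fun y : Fin n → ℝ => y i) x :=
          (ContinuousLinearMap.proj (R := ℝ) (φ := fun _ : Fin n => ℝ) i).differentiableAt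
        exact houter.comp x hinner
      have := (HasFDerivAt.finset_prod (u := Finset.univ)
        (fun i _ => (hgi i).hasFDerivAt)).differentiableAt
      exact this
    have hzpos : ∀ α : {α // α ∈ A}, 0 < zmon α.1 x := by
      intro α
      exact Finset.prod_pos fun i _ => zpow_pos (hx i) _
    have hdiff : ∀ i, DifferentiableAt ℝ
        (fun y => ∑ α : {α // α ∈ A}, σ α.1 * ξ i α * zmon α.1 y) x := by
      intro i
      exact DifferentiableAt.fun_sum fun α _ => (hzmon α).const_mul _
    refine ⟨⟨fun α => σ α.1 * zmon α.1 x, fun α => ?_, fun i => ?_⟩, ?_⟩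
    · have : 0 < σ α.1 * zmon α.1 x := mul_pos (hσ _ α.2) (hzpos α)
      simpa [FewnomialAux.sgn] using this
    · rw [← hzero i]
      exact Finset.sum_congr rfl fun α _ => by ring
    · by_contra hng
      push_neg at hng
      have hli : ¬ LinearIndependent ℝ (fun i : Fin n => ξ i) := by
        intro hli
        obtain ⟨g, hg⟩ := FewnomialAux.exists_minor (fun i : Fin n => ξ i) hli
        exact hg (hng g)
      rw [Fintype.not_linearIndependent_iff] at hli
      obtain ⟨c, hc, i₀, hi₀⟩ := hli
      have hcα : ∀ α : {α // α ∈ A}, ∑ i, c i * ξ i α = 0 := by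
        intro α
        have := congrFun hc α
        simpa [Finset.sum_apply] using this
      have h2 : (fun y : Fin n → ℝ =>
          ∑ i, c i * ∑ α : {α // α ∈ A}, σ α.1 * ξ i α * zmon α.1 y)
          = fun _ : Fin n → ℝ => (0 : ℝ) := by
        funext y
        have hswap : ∑ i, c i * ∑ α : {α // α ∈ A}, σ α.1 * ξ i α * zmon α.1 y
            = ∑ α : {α // α ∈ A}, (∑ i, c i * ξ i α) * (σ α.1 * zmon α.1 y) := by
          simp_rw [Finset.mul_sum, Finset.sum_mul]
          rw [Finset.sum_comm]
          exact Finset.sum_congr rfl fun α _ => Finset.sum_congr rfl fun i _ => by ring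
        rw [hswap]
        exact Finset.sum_eq_zero fun α _ => by rw [hcα α, zero_mul]
      have h3 : fderiv ℝ (fun y : Fin n → ℝ =>
          ∑ i, c i * ∑ α : {α // α ∈ A}, σ α.1 * ξ i α * zmon α.1 y) x
          = ∑ i, c i • fderiv ℝ
              (fun y => ∑ α : {α // α ∈ A}, σ α.1 * ξ i α * zmon α.1 y) x := by
        rw [fderiv_fun_sum fun i _ => (hdiff i).const_mul (c i)]
        exact Finset.sum_congr rfl fun i _ => fderiv_const_mul (hdiff i) (c i)
      have h4 : (∑ i, c i • fderiv ℝ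
          (fun y => ∑ α : {α // α ∈ A}, σ α.1 * ξ i α * zmon α.1 y) x)
          = (0 : (Fin n → ℝ) →L[ℝ] ℝ) := by
        rw [← h3, h2]
        exact fderiv_const_apply (0 : ℝ)
      have hvec : c ᵥ* (Matrix.of fun i j : Fin n =>
          fderiv ℝ (fun y => ∑ α : {α // α ∈ A}, σ α.1 * ξ i α * zmon α.1 y) x
            (Pi.single j 1)) = 0 := by
        funext j
        have happ := congrFun (congrArg (fun (L : (Fin n → ℝ) →L[ℝ] ℝ) => ⇑L) h4)
          (Pi.single j 1)
        simp only [ContinuousLinearMap.coe_sum', Finset.sum_apply,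
          ContinuousLinearMap.coe_smul', Pi.smul_apply, smul_eq_mul,
          ContinuousLinearMap.zero_apply, ContinuousLinearMap.coe_zero,
          Pi.zero_apply] at happ
        show ∑ i, c i * _ = 0
        simpa [Matrix.vecMul, dotProduct] using happ
      have hcne : c ≠ 0 := by
        intro h0
        rw [h0] at hi₀
        exact hi₀ rfl
      exact hdet (Matrix.exists_vecMul_eq_zero_iff.mp ⟨c, hcne, hvec⟩)
  refine le_trans (measure_mono hsub) ?_
  have hfinal := FewnomialAux.core_bound n hn {α // α ∈ A}
  rwa [Fintype.card_coe, ht] at hfinal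
end
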